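/- arXiv:0809.0325 — 9 statements merged into one kernel-verified Lean document; each statement's English description precedes it below -/
import Mathlib

section
/- Let E be a nonzero Banach space, h : E × E* → (−∞,∞] proper and convex with h(x,x*) ≥ ⟨x,x*⟩ for all (x,x*), and suppose h*(x*,x**) ≥ ⟨x*,x**⟩ for all (x*,x**) ∈ E* × E**. Then the lower semicontinuous hull h̄ is a strongly representative function, i.e., h̄ is proper convex lower semicontinuous, h̄(x,x*) ≥ ⟨x,x*⟩ for all (x,x*), and h̄*(x*,x**) ≥ ⟨x*,x**⟩ for all (x*,x**). -/
open NormedSpace Set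
open scoped Classical

noncomputable section

lemma ereal_mul_ne_bot (b : ℝ) (hb : 0 ≤ b) (z : EReal) (hz : z ≠ ⊥) : (b : EReal) * z ≠ ⊥ := by
  rcases eq_or_lt_of_le hb with rfl | hb'
  · simp
  · induction z using EReal.rec with
    | bot => exact absurd rfl hz
    | coe r => rw [← EReal.coe_mul]; exact EReal.coe_ne_bot _
    | top => rw [EReal.coe_mul_top_of_pos hb']; exact top_ne_bot

lemma lsc_of_closed_epi {X : Type*} [TopologicalSpace X] (f : X → EReal)
    (hcl : IsClosed {p : X × ℝ | f p.1 ≤ (p.2 : EReal)}) : LowerSemicontinuous f := by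
  intro x y hy
  obtain ⟨c, hc1, hc2⟩ := exists_between hy
  have hcbot : c ≠ ⊥ := (lt_of_le_of_lt bot_le hc1).ne'
  have hctop : c ≠ ⊤ := (lt_of_lt_of_le hc2 le_top).ne
  set r : ℝ := c.toReal with hr
  have hcr : c = (r : EReal) := (EReal.coe_toReal hctop hcbot).symm
  have hopen : IsOpen {x' : X | ¬ f x' ≤ (r : EReal)} := by
    have : {x' : X | ¬ f x' ≤ (r : EReal)} =
        (fun x' : X => (x', r)) ⁻¹' {p : X × ℝ | f p.1 ≤ (p.2 : EReal)}ᶜ := rfl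
    rw [this]
    exact hcl.isOpen_compl.preimage (continuous_id.prodMk continuous_const)
  have hxmem : x ∈ {x' : X | ¬ f x' ≤ (r : EReal)} := by
    simp only [mem_setOf_eq, not_le]; rw [← hcr]; exact hc2
  filter_upwards [hopen.mem_nhds hxmem] with x' hx'
  exact lt_trans (hcr ▸ hc1) (not_le.1 hx')


/-- Convexity for `EReal`-valued functions. -/
def EConvexOn {G : Type*} [AddCommGroup G] [Module ℝ G] (f : G → EReal) : Prop :=
  ∀ x y : G, ∀ a b : ℝ, 0 ≤ a → 0 ≤ b → a + b = 1 →
    f (a • x + b • y) ≤ (a : EReal) * f x + (b : EReal) * f y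

/-- Proper: somewhere finite, never `⊥`. -/
def ProperFun {G : Type*} (f : G → EReal) : Prop := (∃ x, f x ≠ ⊤) ∧ ∀ x, f x ≠ ⊥

/-- Fenchel conjugate of a function on a product of two normed spaces, with respect to the
pairing `⟨(x,u),(xs,us)⟩ = xs x + us u`. -/
def conj2 {E F : Type*} [NormedAddCommGroup E] [NormedSpace ℝ E]
    [NormedAddCommGroup F] [NormedSpace ℝ F]
    (f : E × F → EReal) (p : StrongDual ℝ E × StrongDual ℝ F) : EReal :=
  ⨆ q : E × F, ((p.1 q.1 + p.2 q.2 : ℝ) : EReal) - f q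

/-- A representative function on `E × E*`. -/
def IsRep {E : Type*} [NormedAddCommGroup E] [NormedSpace ℝ E]
    (f : E × StrongDual ℝ E → EReal) : Prop :=
  ProperFun f ∧ EConvexOn f ∧ LowerSemicontinuous f ∧
    ∀ p : E × StrongDual ℝ E, ((p.2 p.1 : ℝ) : EReal) ≤ f p

/-- A strongly representative function on `E × E*`. -/
def IsStrongRep {E : Type*} [NormedAddCommGroup E] [NormedSpace ℝ E]
    (f : E × StrongDual ℝ E → EReal) : Prop :=
  IsRep f ∧ ∀ p : StrongDual ℝ E × StrongDual ℝ (StrongDual ℝ E), ((p.2 p.1 : ℝ) : EReal) ≤ conj2 f p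

/-- The monotone multifunction associated to a representative function. -/
def Mgraph {E : Type*} [NormedAddCommGroup E] [NormedSpace ℝ E]
    (f : E × StrongDual ℝ E → EReal) (x : E) : Set (StrongDual ℝ E) :=
  {xs | f (x, xs) = ((xs x : ℝ) : EReal)}

/-- Monotone multifunction. -/
def MonoMF {E : Type*} [NormedAddCommGroup E] [NormedSpace ℝ E]
    (S : E → Set (StrongDual ℝ E)) : Prop :=
  ∀ x y : E, ∀ xs ys : StrongDual ℝ E, xs ∈ S x → ys ∈ S y → 0 ≤ (xs - ys) (x - y)

/-- Maximally monotone multifunction. -/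
def MaxMonoMF {E : Type*} [NormedAddCommGroup E] [NormedSpace ℝ E]
    (S : E → Set (StrongDual ℝ E)) : Prop :=
  MonoMF S ∧ ∀ x : E, ∀ xs : StrongDual ℝ E,
    (∀ s : E, ∀ ss : StrongDual ℝ E, ss ∈ S s → 0 ≤ (xs - ss) (x - s)) → xs ∈ S x

/-- The function `h_{K,ys}` of Example 6. -/
def hfun {E : Type*} [NormedAddCommGroup E] [NormedSpace ℝ E]
    (K : Set E) (ys : StrongDual ℝ E) (p : E × StrongDual ℝ E) : EReal :=
  (if p.1 ∈ K then (0 : EReal) else ⊤) + ((ys p.1 : ℝ) : EReal)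
    + ((sSup ((fun k : E => (p.2 - ys) k) '' K) : ℝ) : EReal)

/-- The function `g_{y,K}` of Example 7. -/
def gfun {E : Type*} [NormedAddCommGroup E] [NormedSpace ℝ E]
    (y : E) (K : Set (StrongDual ℝ E)) (p : E × StrongDual ℝ E) : EReal :=
  ((sSup ((fun k : StrongDual ℝ E => k (p.1 - y)) '' K) : ℝ) : EReal)
    + (if p.2 ∈ K then (0 : EReal) else ⊤) + ((p.2 y : ℝ) : EReal)

/-- Parallel sum of multifunctions. -/
def parSum {E : Type*} [NormedAddCommGroup E] [NormedSpace ℝ E]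
    (S T : E → Set (StrongDual ℝ E)) (x : E) : Set (StrongDual ℝ E) :=
  {xs | ∃ v : E, xs ∈ S (x - v) ∧ xs ∈ T v}

theorem stmt2 {E : Type*} [NormedAddCommGroup E] [NormedSpace ℝ E] [CompleteSpace E] [Nontrivial E]
    (h hbar : E × StrongDual ℝ E → EReal) (hp : ProperFun h) (hc : EConvexOn h)
    (hge : ∀ p : E × StrongDual ℝ E, ((p.2 p.1 : ℝ) : EReal) ≤ h p)
    (hcge : ∀ p : StrongDual ℝ E × StrongDual ℝ (StrongDual ℝ E), ((p.2 p.1 : ℝ) : EReal) ≤ conj2 h p)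
    (hepi : {p : (E × StrongDual ℝ E) × ℝ | hbar p.1 ≤ (p.2 : EReal)} =
      closure {p : (E × StrongDual ℝ E) × ℝ | h p.1 ≤ (p.2 : EReal)}) :
    IsStrongRep hbar := by
  -- hbar ≤ h
  have hbar_le : ∀ p, hbar p ≤ h p := by
    intro p
    by_cases hT : h p = ⊤
    · rw [hT]; exact le_top
    · have hB := hp.2 p
      have hco : h p = ((h p).toReal : EReal) := (EReal.coe_toReal hT hB).symm
      have hmem : (p, (h p).toReal) ∈ {p : (E × StrongDual ℝ E) × ℝ | h p.1 ≤ (p.2 : EReal)} := by simp only [mem_setOf_eq]; exact le_of_eq hco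
      have : (p, (h p).toReal) ∈ {p : (E × StrongDual ℝ E) × ℝ | hbar p.1 ≤ (p.2 : EReal)} := by rw [hepi]; exact subset_closure hmem
      calc hbar p ≤ ((h p).toReal : EReal) := this
        _ = h p := hco.symm
  -- the pairing is continuous
  have hπ : Continuous fun p : E × StrongDual ℝ E => p.2 p.1 :=
    isBoundedBilinearMap_apply.continuous.comp (continuous_snd.prodMk continuous_fst)
  -- closed superset
  have hCclosed : IsClosed {p : (E × StrongDual ℝ E) × ℝ | p.1.2 p.1.1 ≤ p.2} :=
    isClosed_le (hπ.comp continuous_fst) continuous_snd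
  have hsub : {p : (E × StrongDual ℝ E) × ℝ | hbar p.1 ≤ (p.2 : EReal)} ⊆ {p : (E × StrongDual ℝ E) × ℝ | p.1.2 p.1.1 ≤ p.2} := by
    rw [hepi]
    refine closure_minimal ?_ hCclosed
    intro p hpm
    have h1 : ((p.1.2 p.1.1 : ℝ) : EReal) ≤ (p.2 : EReal) := le_trans (hge p.1) hpm
    exact EReal.coe_le_coe_iff.1 h1
  -- hbar ≥ pairing
  have hbar_ge : ∀ p : E × StrongDual ℝ E, ((p.2 p.1 : ℝ) : EReal) ≤ hbar p := by
    intro p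
    by_contra hlt
    push_neg at hlt
    obtain ⟨c, hc1, hc2⟩ := exists_between hlt
    have hcbot : c ≠ ⊥ := (lt_of_le_of_lt bot_le hc1).ne'
    have hctop : c ≠ ⊤ := (lt_of_lt_of_le hc2 le_top).ne
    have hcr : c = (c.toReal : EReal) := (EReal.coe_toReal hctop hcbot).symm
    have hmem : (p, c.toReal) ∈ {p : (E × StrongDual ℝ E) × ℝ | hbar p.1 ≤ (p.2 : EReal)} := by
      simp only [mem_setOf_eq]; exact le_of_lt (hcr ▸ hc1)
    have := hsub hmem
    simp only [mem_setOf_eq] at this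
    have h2 : (c.toReal : EReal) < ((p.2 p.1 : ℝ) : EReal) := hcr ▸ hc2
    exact absurd this (not_le.2 (EReal.coe_lt_coe_iff.1 h2))
  have hbar_nebot : ∀ p, hbar p ≠ ⊥ := fun p =>
    (lt_of_lt_of_le (by exact bot_lt_iff_ne_bot.2 (EReal.coe_ne_bot _)) (hbar_ge p)).ne'
  -- properness
  obtain ⟨x0, hx0⟩ := hp.1
  have hproper1 : hbar x0 ≠ ⊤ := (lt_of_le_of_lt (hbar_le x0) (lt_top_iff_ne_top.2 hx0)).ne
  -- convexity of {p : (E × StrongDual ℝ E) × ℝ | h p.1 ≤ (p.2 : EReal)}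
  have hconvh : Convex ℝ {p : (E × StrongDual ℝ E) × ℝ | h p.1 ≤ (p.2 : EReal)} := by
    rintro ⟨q1, s1⟩ hq1 ⟨q2, s2⟩ hq2 a b ha hb hab
    simp only [mem_setOf_eq] at hq1 hq2 ⊢
    have key := hc q1 q2 a b ha hb hab
    have h1 : (a : EReal) * h q1 ≤ (a : EReal) * (s1 : EReal) :=
      mul_le_mul_of_nonneg_left hq1 (by exact_mod_cast ha)
    have h2 : (b : EReal) * h q2 ≤ (b : EReal) * (s2 : EReal) :=
      mul_le_mul_of_nonneg_left hq2 (by exact_mod_cast hb)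
    have : h (a • q1 + b • q2) ≤ ((a * s1 + b * s2 : ℝ) : EReal) := by
      calc h (a • q1 + b • q2) ≤ (a : EReal) * h q1 + (b : EReal) * h q2 := key
        _ ≤ (a : EReal) * (s1 : EReal) + (b : EReal) * (s2 : EReal) := add_le_add h1 h2
        _ = ((a * s1 + b * s2 : ℝ) : EReal) := by
            rw [EReal.coe_add, EReal.coe_mul, EReal.coe_mul]
    simpa using this
  have hconvb : Convex ℝ {p : (E × StrongDual ℝ E) × ℝ | hbar p.1 ≤ (p.2 : EReal)} := by
    rw [hepi]; exact hconvh.closure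
  -- EConvexOn hbar
  have hbconv : ∀ x y : E × StrongDual ℝ E, ∀ a b : ℝ, 0 ≤ a → 0 ≤ b → a + b = 1 →
      hbar (a • x + b • y) ≤ (a : EReal) * hbar x + (b : EReal) * hbar y := by
    intro x y a b ha hb hab
    rcases eq_or_lt_of_le ha with rfl | ha'
    · have hb1 : b = 1 := by linarith
      subst hb1
      simp [zero_smul, one_smul]
    rcases eq_or_lt_of_le hb with rfl | hb'
    · have ha1 : a = 1 := by linarith
      subst ha1
      simp [zero_smul, one_smul]
    by_cases hxT : hbar x = ⊤
    · rw [hxT, EReal.mul_top_of_pos (by exact_mod_cast ha'),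
        EReal.top_add_of_ne_bot (ereal_mul_ne_bot b hb _ (hbar_nebot y))]
      exact le_top
    by_cases hyT : hbar y = ⊤
    · rw [hyT, EReal.mul_top_of_pos (by exact_mod_cast hb'),
        EReal.add_top_of_ne_bot (ereal_mul_ne_bot a ha _ (hbar_nebot x))]
      exact le_top
    · have hxr : hbar x = ((hbar x).toReal : EReal) := (EReal.coe_toReal hxT (hbar_nebot x)).symm
      have hyr : hbar y = ((hbar y).toReal : EReal) := (EReal.coe_toReal hyT (hbar_nebot y)).symm
      have hmx : (x, (hbar x).toReal) ∈ {p : (E × StrongDual ℝ E) × ℝ | hbar p.1 ≤ (p.2 : EReal)} := by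
        simp only [mem_setOf_eq]; exact le_of_eq hxr
      have hmy : (y, (hbar y).toReal) ∈ {p : (E × StrongDual ℝ E) × ℝ | hbar p.1 ≤ (p.2 : EReal)} := by
        simp only [mem_setOf_eq]; exact le_of_eq hyr
      have := hconvb hmx hmy ha hb hab
      simp only [mem_setOf_eq, Prod.smul_mk, Prod.mk_add_mk, smul_eq_mul] at this
      calc hbar (a • x + b • y) ≤ ((a * (hbar x).toReal + b * (hbar y).toReal : ℝ) : EReal) := this
        _ = (a : EReal) * hbar x + (b : EReal) * hbar y := by
            rw [EReal.coe_add, EReal.coe_mul, EReal.coe_mul, ← hxr, ← hyr]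
  -- lower semicontinuity
  have hlsc : LowerSemicontinuous hbar :=
    lsc_of_closed_epi hbar (by rw [hepi]; exact isClosed_closure)
  -- conjugate inequality
  have hconj : ∀ p : StrongDual ℝ E × StrongDual ℝ (StrongDual ℝ E), conj2 h p ≤ conj2 hbar p := by
    intro p
    exact iSup_mono fun q => EReal.sub_le_sub le_rfl (hbar_le q)
  exact ⟨⟨⟨⟨x0, hproper1⟩, hbar_nebot⟩, hbconv, hlsc, hbar_ge⟩,
    fun p => le_trans (hcge p) (hconj p)⟩
end
end

section
/- Let E and F be nonzero Banach spaces, f, g proper convex lsc on E × F, with ⋃_{λ>0} λ[π_E dom g − π_E dom f] a closed subspace of E. For all (x,y) ∈ E × F let h(x,y) := inf{ f(x, y − v) + g(x, v) : v ∈ F } and assume h > −∞ everywhere. Then for all (x*,u*) ∈ E* × F*, h*(x*,u*) = min{ f*(x* − y*, u*) + g*(y*, u*) : y* ∈ E* }, with the minimum attained. -/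
open NormedSpace Set Filter Topology
open scoped Classical Pointwise

noncomputable section

lemma ereal_le_of_forall_real_lt {x y : EReal} (h : ∀ r : ℝ, (r:EReal) < x → (r:EReal) ≤ y) :
    x ≤ y := by
  by_contra hxy
  push_neg at hxy
  obtain ⟨r, hyr, hrx⟩ := EReal.exists_between_coe_real hxy
  exact absurd (h r hrx) (not_le.2 hyr)

lemma ereal_sup_add_sup_le {ι κ : Type*} (F : ι → EReal) (G : κ → EReal) (α : EReal)
    (h : ∀ i j, F i + G j ≤ α) : (⨆ i, F i) + (⨆ j, G j) ≤ α := by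
  set S := ⨆ i, F i with hSdef
  set T := ⨆ j, G j with hTdef
  apply ereal_le_of_forall_real_lt
  intro r hr
  have hS : S ≠ ⊥ := by
    intro hS0; rw [hS0, EReal.bot_add] at hr; exact absurd hr not_lt_bot
  have hT : T ≠ ⊥ := by
    intro hT0; rw [hT0, EReal.add_bot] at hr; exact absurd hr not_lt_bot
  obtain ⟨r1, r2, h1, h2, hle⟩ : ∃ r1 r2 : ℝ, (r1:EReal) < S ∧ (r2:EReal) < T ∧ r ≤ r1 + r2 := by
    by_cases hSt : S = ⊤
    · by_cases hTt : T = ⊤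
      · exact ⟨r, 0, by simp [hSt], by simp [hTt], by simp⟩
      · obtain ⟨t, ht⟩ : ∃ t:ℝ, T = (t:EReal) := ⟨T.toReal, (EReal.coe_toReal hTt hT).symm⟩
        refine ⟨r - (t-1), t-1, by simp only [hSt]; exact_mod_cast EReal.coe_lt_top _, by rw [ht]; exact_mod_cast (by linarith : t-1 < t),
          by linarith⟩
    · obtain ⟨s, hs⟩ : ∃ s:ℝ, S = (s:EReal) := ⟨S.toReal, (EReal.coe_toReal hSt hS).symm⟩
      by_cases hTt : T = ⊤
      · refine ⟨s - 1, r - (s-1), by rw [hs]; exact_mod_cast (by linarith : s-1 < s),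
          by simp only [hTt]; exact_mod_cast EReal.coe_lt_top _, by linarith⟩
      · obtain ⟨t, ht⟩ : ∃ t:ℝ, T = (t:EReal) := ⟨T.toReal, (EReal.coe_toReal hTt hT).symm⟩
        have hrst : r < s + t := by
          rw [hs, ht] at hr; exact_mod_cast hr
        refine ⟨s - (s+t-r)/2, t - (s+t-r)/2, ?_, ?_, by linarith⟩
        · rw [hs]; exact_mod_cast (by linarith : s - (s+t-r)/2 < s)
        · rw [ht]; exact_mod_cast (by linarith : t - (s+t-r)/2 < t)
  obtain ⟨i, hi⟩ := lt_iSup_iff.mp (hSdef ▸ h1)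
  obtain ⟨j, hj⟩ := lt_iSup_iff.mp (hTdef ▸ h2)
  calc (r:EReal) ≤ ((r1 + r2 : ℝ) : EReal) := by exact_mod_cast hle
    _ = (r1:EReal) + (r2:EReal) := by norm_cast
    _ ≤ F i + G j := add_le_add hi.le hj.le
    _ ≤ α := h i j

lemma ereal_split (p q : ℝ) (X Y : EReal) (hX : X ≠ ⊥) (hY : Y ≠ ⊥) :
    ((p:EReal) - X) + ((q:EReal) - Y) ≤ ((p+q:ℝ):EReal) - (X + Y) := by
  by_cases hXt : X = ⊤
  · simp [hXt]
  by_cases hYt : Y = ⊤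
  · simp [hYt]
  obtain ⟨x, rfl⟩ : ∃ x:ℝ, X = (x:EReal) := ⟨X.toReal, (EReal.coe_toReal hXt hX).symm⟩
  obtain ⟨y, rfl⟩ : ∃ y:ℝ, Y = (y:EReal) := ⟨Y.toReal, (EReal.coe_toReal hYt hY).symm⟩
  apply le_of_eq
  norm_cast
  ring


set_option maxHeartbeats 1000000 in
lemma core {X Z : Type*} [NormedAddCommGroup X] [NormedSpace ℝ X] [CompleteSpace X]
    [NormedAddCommGroup Z] [NormedSpace ℝ Z] [CompleteSpace Z]
    (Φ : X → EReal) (hbot : ∀ w, Φ w ≠ ⊥)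
    (hconv : ∀ (w w' : X) (t t' a b : ℝ), 0 ≤ a → 0 ≤ b → a + b = 1 →
      Φ w ≤ (t:EReal) → Φ w' ≤ (t':EReal) → Φ (a•w + b•w') ≤ ((a*t+b*t' : ℝ):EReal))
    (hcl : ∀ (v : ℕ → X) (w : X) (t : ℝ), Tendsto v atTop (nhds w) →
      (∀ n, Φ (v n) ≤ (t:EReal)) → Φ w ≤ (t:EReal))
    (L : X →L[ℝ] Z) (M : Submodule ℝ Z) (hMcl : IsClosed (M : Set Z))
    (hdom : ∀ w, Φ w ≠ ⊤ → L w ∈ M)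
    (hcov : ∀ z ∈ M, ∃ l : ℝ, 0 < l ∧ ∃ w, Φ w ≠ ⊤ ∧ z = l • L w)
    (β : ℝ) (hge : ∀ w, L w = 0 → (β : EReal) ≤ Φ w)
    (hfin : ∃ w, L w = 0 ∧ Φ w ≠ ⊤) :
    ∃ ys : Z →L[ℝ] ℝ, ∀ w, (β : EReal) ≤ Φ w + ((ys (L w) : ℝ) : EReal) := by
  classical
  haveI : CompleteSpace ↥M := hMcl.completeSpace_coe
  haveI : BaireSpace ↥M := BaireSpace.of_completelyPseudoMetrizable
  -- basic data
  obtain ⟨w0, hw0L, hw0t⟩ := hfin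
  obtain ⟨t0, ht0⟩ : ∃ t0 : ℝ, Φ w0 = (t0:EReal) :=
    ⟨(Φ w0).toReal, (EReal.coe_toReal hw0t (hbot w0)).symm⟩
  -- the sublevel sets
  set S : ℕ → Set ↥M := fun m =>
    {z : ↥M | ∃ w, L w = (z:Z) ∧ ‖w‖ ≤ (m:ℝ) ∧ Φ w ≤ ((m:ℝ):EReal)} with hSdef
  have Smono : ∀ {m m' : ℕ}, m ≤ m' → S m ⊆ S m' := by
    intro m m' hmm z ⟨w, h1, h2, h3⟩
    exact ⟨w, h1, h2.trans (by exact_mod_cast hmm),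
      h3.trans (by exact_mod_cast (by exact_mod_cast hmm : (m:ℝ) ≤ (m':ℝ)))⟩
  have Sconvex : ∀ m, Convex ℝ (S m) := by
    intro m z hz z' hz' a b ha hb hab
    obtain ⟨w, hw1, hw2, hw3⟩ := hz
    obtain ⟨w', hw1', hw2', hw3'⟩ := hz'
    refine ⟨a • w + b • w', ?_, ?_, ?_⟩
    · rw [map_add, map_smul, map_smul, hw1, hw1']
      push_cast
      rfl
    · calc ‖a • w + b • w'‖ ≤ ‖a • w‖ + ‖b • w'‖ := norm_add_le _ _
        _ ≤ a * (m:ℝ) + b * (m:ℝ) := by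
            rw [norm_smul, norm_smul, Real.norm_eq_abs, Real.norm_eq_abs,
              abs_of_nonneg ha, abs_of_nonneg hb]
            gcongr
        _ = (m:ℝ) := by rw [← add_mul, hab, one_mul]
    · have := hconv w w' m m a b ha hb hab hw3 hw3'
      calc Φ (a • w + b • w') ≤ ((a*(m:ℝ)+b*(m:ℝ) : ℝ):EReal) := this
        _ = ((m:ℝ):EReal) := by rw [← add_mul, hab, one_mul]
  -- 0 belongs to some S m0
  obtain ⟨m0, hm0⟩ : ∃ m0 : ℕ, max ‖w0‖ t0 ≤ (m0:ℝ) := exists_nat_ge _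
  have h0S : (0 : ↥M) ∈ S m0 := by
    refine ⟨w0, by simpa using hw0L, le_trans (le_max_left _ _) hm0, ?_⟩
    rw [ht0]
    exact_mod_cast le_trans (le_max_right ‖w0‖ t0) hm0
  -- covering of M
  have hcover : ∀ z : ↥M, ∃ nm : ℕ × ℕ, z ∈ ((nm.1+1:ℝ)) • S nm.2 := by
    intro z
    obtain ⟨l, hl, w, hwt, hz⟩ := hcov (z:Z) z.2
    obtain ⟨r, hr⟩ : ∃ r : ℝ, Φ w = (r:EReal) :=
      ⟨(Φ w).toReal, (EReal.coe_toReal hwt (hbot w)).symm⟩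
    obtain ⟨m1, hm1⟩ : ∃ m1 : ℕ, max ‖w‖ r ≤ (m1:ℝ) := exists_nat_ge _
    obtain ⟨n, hn⟩ : ∃ n : ℕ, l ≤ (n:ℝ)+1 := by
      obtain ⟨n, hn⟩ := exists_nat_ge l
      exact ⟨n, hn.trans (by linarith)⟩
    have hν : (0:ℝ) < (n:ℝ)+1 := by positivity
    set t : ℝ := l / ((n:ℝ)+1) with htdef
    have htpos : 0 < t := div_pos hl hν
    have ht1 : t ≤ 1 := by
      rw [div_le_one hν]; exact hn
    -- the element of S (m0+m1)
    have hLwM : L w ∈ M := hdom w hwt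
    refine ⟨(n, m0+m1), ?_⟩
    rw [mem_smul_set]
    refine ⟨⟨t • L w, M.smul_mem t hLwM⟩, ?_, ?_⟩
    · refine ⟨t • w + (1-t) • w0, ?_, ?_, ?_⟩
      · rw [map_add, map_smul, map_smul, hw0L, smul_zero, add_zero]
      · calc ‖t • w + (1-t) • w0‖ ≤ ‖t • w‖ + ‖(1-t) • w0‖ := norm_add_le _ _
          _ ≤ 1 * ‖w‖ + 1 * ‖w0‖ := by
              rw [norm_smul, norm_smul, Real.norm_eq_abs, Real.norm_eq_abs,
                abs_of_nonneg htpos.le, abs_of_nonneg (by linarith : (0:ℝ) ≤ 1-t)]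
              gcongr <;> linarith
          _ ≤ ((m0+m1 : ℕ):ℝ) := by
              push_cast
              have h1 : ‖w‖ ≤ (m1:ℝ) := le_trans (le_max_left _ _) hm1
              have h2 : ‖w0‖ ≤ (m0:ℝ) := le_trans (le_max_left _ _) hm0
              linarith
      · have hc := hconv w w0 r t0 t (1-t) htpos.le (by linarith) (by ring)
          (le_of_eq hr) (le_of_eq ht0)
        refine hc.trans ?_
        have h1 : r ≤ (m1:ℝ) := le_trans (le_max_right _ _) hm1
        have h2 : t0 ≤ (m0:ℝ) := le_trans (le_max_right _ _) hm0
        have : t*r + (1-t)*t0 ≤ ((m0+m1:ℕ):ℝ) := by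
          push_cast
          nlinarith [(by positivity : (0:ℝ) ≤ (m0:ℝ)), (by positivity : (0:ℝ) ≤ (m1:ℝ))]
        exact_mod_cast this
    · apply Subtype.ext
      push_cast
      rw [smul_smul, hz, htdef]
      congr 1
      field_simp
  -- Baire
  obtain ⟨nm, hint⟩ : ∃ nm : ℕ × ℕ,
      (interior (closure (((nm.1+1:ℝ)) • S nm.2))).Nonempty := by
    apply nonempty_interior_of_iUnion_of_closed (fun nm => isClosed_closure)
    apply eq_univ_iff_forall.mpr
    intro z
    obtain ⟨nm, hnm⟩ := hcover z
    exact mem_iUnion.mpr ⟨nm, subset_closure hnm⟩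
  -- extract a ball inside closure (S N) around 0
  obtain ⟨N, ρ, hρ, hball0⟩ : ∃ (N : ℕ) (ρ : ℝ), 0 < ρ ∧
      ∀ u : ↥M, ‖u‖ < ρ → u ∈ closure (S N) := by
    obtain ⟨x0, hx0⟩ := hint
    rw [mem_interior_iff_mem_nhds, Metric.mem_nhds_iff] at hx0
    obtain ⟨r0, hr0, hball⟩ := hx0
    set m : ℕ := nm.2 with hmdef
    set ν : ℝ := (nm.1:ℝ)+1 with hνdef
    have hν : (0:ℝ) < ν := by positivity
    have hsmul_closure : closure ((ν:ℝ) • S m) = ν • closure (S m) :=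
      closure_smul₀' hν.ne' _
    set z1 : ↥M := ν⁻¹ • x0 with hz1def
    set r1 : ℝ := r0/ν with hr1def
    have hr1 : 0 < r1 := div_pos hr0 hν
    have hball1 : ∀ x : ↥M, ‖x - z1‖ < r1 → x ∈ closure (S m) := by
      intro x hx
      have h1 : ν • x ∈ Metric.ball x0 r0 := by
        rw [Metric.mem_ball, dist_eq_norm]
        have he : ν • x - x0 = ν • (x - z1) := by
          rw [smul_sub, hz1def, smul_inv_smul₀ hν.ne']
        rw [he, norm_smul, Real.norm_eq_abs, abs_of_pos hν]
        calc ν * ‖x - z1‖ < ν * r1 := by exact mul_lt_mul_of_pos_left hx hν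
          _ = r0 := by rw [hr1def]; field_simp
      have h2 := hball h1
      rw [hsmul_closure] at h2
      exact (smul_mem_smul_set_iff₀ hν.ne' _ _).mp h2
    obtain ⟨⟨n1, m1⟩, hz1neg⟩ := hcover (-z1)
    rw [mem_smul_set] at hz1neg
    obtain ⟨c1, hc1S, hc1⟩ := hz1neg
    set μ : ℝ := (n1:ℝ)+1 with hμdef
    have hμ : (0:ℝ) < μ := by positivity
    refine ⟨max m m1, r1/(1+μ), by positivity, ?_⟩
    intro u hu
    set N := max m m1
    have hSN : closure (S m) ⊆ closure (S N) := closure_mono (Smono (le_max_left _ _))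
    have hv : ((1+μ) • u + z1) ∈ closure (S N) := by
      apply hSN; apply hball1
      have he : (1+μ) • u + z1 - z1 = (1+μ) • u := add_sub_cancel_right _ _
      rw [he, norm_smul, Real.norm_eq_abs, abs_of_pos (by linarith : (0:ℝ) < 1+μ)]
      calc (1+μ) * ‖u‖ < (1+μ) * (r1/(1+μ)) := by
            exact mul_lt_mul_of_pos_left hu (by linarith)
        _ = r1 := by field_simp
    have hc1' : c1 ∈ closure (S N) := subset_closure (Smono (le_max_right _ _) hc1S)
    have hcomb := ((Sconvex N).closure) hc1' hv
      (by positivity : (0:ℝ) ≤ μ/(1+μ)) (by positivity : (0:ℝ) ≤ 1/(1+μ))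
      (by field_simp; ring)
    have hueq : (μ/(1+μ)) • c1 + (1/(1+μ)) • ((1+μ) • u + z1) = u := by
      have hc1eq : c1 = μ⁻¹ • (-z1) := by
        have := hc1
        rw [hμdef] at this ⊢
        rw [← this, inv_smul_smul₀ (by positivity : ((n1:ℝ)+1) ≠ 0)]
      rw [hc1eq]
      match_scalars <;> field_simp <;> ring
    rw [hueq] at hcomb
    exact hcomb
  -- the key point: small elements of M have preimages with controlled Φ
  have key : ∀ z : ↥M, ‖z‖ < ρ/2 → ∃ w, L w = (z:Z) ∧ Φ w ≤ (((N:ℝ)):EReal) := by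
    intro z hz
    have step : ∀ (k : ℕ) (u : ↥M), ‖u‖ < ρ * (2⁻¹:ℝ)^(k+1) →
        ∃ (s : ↥M) (ww : X), L ww = (s:Z) ∧ ‖ww‖ ≤ (N:ℝ) ∧ Φ ww ≤ ((N:ℝ):EReal) ∧
          ‖u - ((2⁻¹:ℝ)^(k+1)) • s‖ < ρ * (2⁻¹:ℝ)^(k+2) := by
      intro k u hu
      have hpow : (0:ℝ) < (2:ℝ)^(k+1) := by positivity
      have h1 : ((2:ℝ)^(k+1)) • u ∈ closure (S N) := by
        apply hball0
        rw [norm_smul, Real.norm_eq_abs, abs_of_pos hpow]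
        calc (2:ℝ)^(k+1) * ‖u‖ < (2:ℝ)^(k+1) * (ρ * (2⁻¹)^(k+1)) :=
              mul_lt_mul_of_pos_left hu hpow
          _ = ρ := by
              rw [inv_pow]
              field_simp
      obtain ⟨s, hsS, hsd⟩ := Metric.mem_closure_iff.mp h1 (ρ/2) (by positivity)
      obtain ⟨ww, hww1, hww2, hww3⟩ := hsS
      refine ⟨s, ww, hww1, hww2, hww3, ?_⟩
      have he : u - ((2⁻¹:ℝ)^(k+1)) • s = ((2⁻¹:ℝ)^(k+1)) • (((2:ℝ)^(k+1)) • u - s) := by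
        rw [smul_sub, smul_smul, inv_pow, inv_mul_cancel₀ hpow.ne', one_smul]
      rw [he, norm_smul, Real.norm_eq_abs, abs_of_pos (by positivity : (0:ℝ) < (2⁻¹:ℝ)^(k+1))]
      rw [dist_eq_norm] at hsd
      calc (2⁻¹:ℝ)^(k+1) * ‖((2:ℝ)^(k+1)) • u - s‖ < (2⁻¹:ℝ)^(k+1) * (ρ/2) :=
            mul_lt_mul_of_pos_left hsd (by positivity)
        _ = ρ * (2⁻¹:ℝ)^(k+2) := by ring
    -- recursive construction
    let nxt : ℕ → ↥M × X → ↥M × X := fun k p =>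
      if h : ‖p.1‖ < ρ * (2⁻¹:ℝ)^(k+1) then
        (p.1 - ((2⁻¹:ℝ)^(k+1)) • (step k p.1 h).choose,
          (step k p.1 h).choose_spec.choose)
      else p
    let q : ℕ → ↥M × X := fun k => Nat.rec (z, w0) (fun k p => nxt k p) k
    have hqsucc : ∀ k, q (k+1) = nxt k (q k) := fun k => rfl
    have hinv : ∀ k, ‖(q k).1‖ < ρ * (2⁻¹:ℝ)^(k+1) := by
      intro k
      induction k with
      | zero => show ‖z‖ < ρ * (2⁻¹:ℝ)^(0+1); simpa [pow_one, div_eq_mul_inv] using hz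
      | succ k ih =>
        rw [hqsucc k]
        simp only [nxt, dif_pos ih]
        exact (step k (q k).1 ih).choose_spec.choose_spec.2.2.2
    set u : ℕ → ↥M := fun k => (q k).1 with hudef
    set sc : ℕ → ↥M := fun k => (step k (u k) (hinv k)).choose with hscdef
    set ω : ℕ → X := fun k => (step k (u k) (hinv k)).choose_spec.choose with hωdef
    have hprop : ∀ k, L (ω k) = ((sc k):Z) ∧ ‖ω k‖ ≤ (N:ℝ) ∧ Φ (ω k) ≤ ((N:ℝ):EReal) :=
      fun k => ⟨(step k (u k) (hinv k)).choose_spec.choose_spec.1,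
        (step k (u k) (hinv k)).choose_spec.choose_spec.2.1,
        (step k (u k) (hinv k)).choose_spec.choose_spec.2.2.1⟩
    have hu : ∀ k, u (k+1) = u k - ((2⁻¹:ℝ)^(k+1)) • sc k := by
      intro k
      show (q (k+1)).1 = _
      rw [hqsucc k]
      simp only [nxt, dif_pos (hinv k)]
      rfl
    set a : ℕ → X := fun k => ((2⁻¹:ℝ)^(k+1)) • ω k with hadef
    have hsummable : Summable a := by
      apply Summable.of_norm_bounded (g := fun k => ((N:ℝ) * 2⁻¹) * (2⁻¹:ℝ)^k)
      · exact (summable_geometric_of_lt_one (by norm_num) (by norm_num)).mul_left _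
      · intro k
        rw [hadef, norm_smul, Real.norm_eq_abs, abs_of_pos (by positivity : (0:ℝ) < (2⁻¹:ℝ)^(k+1))]
        calc (2⁻¹:ℝ)^(k+1) * ‖ω k‖ ≤ (2⁻¹:ℝ)^(k+1) * (N:ℝ) := by
              exact mul_le_mul_of_nonneg_left (hprop k).2.1 (by positivity)
          _ = ((N:ℝ) * 2⁻¹) * (2⁻¹:ℝ)^k := by ring
    set w : X := ∑' k, a k with hwdef
    have hW : HasSum a w := hsummable.hasSum
    have hLa : ∀ k, L (a k) = ((u k : Z)) - ((u (k+1) : Z)) := by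
      intro k
      rw [hadef]
      simp only
      rw [map_smul, (hprop k).1, hu k]
      push_cast
      abel
    have hU0 : Tendsto (fun n => ((u n : Z))) atTop (𝓝 0) := by
      have h2 : Tendsto (fun n:ℕ => ρ * (2⁻¹:ℝ)^(n+1)) atTop (𝓝 (ρ * 0)) := by
        apply Tendsto.const_mul
        have := (tendsto_pow_atTop_nhds_zero_of_lt_one (by norm_num : (0:ℝ) ≤ 2⁻¹)
          (by norm_num : (2⁻¹:ℝ) < 1))
        exact this.comp (tendsto_add_atTop_nat 1)
      have hbnd : ∀ n, ‖((u n : Z))‖ ≤ ρ * (2⁻¹:ℝ)^(n+1) := fun n => (hinv n).le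
      exact squeeze_zero_norm hbnd (by simpa using h2)
    have hLz : L w = (z:Z) := by
      have hLsum : HasSum (fun k => L (a k)) (L w) := L.hasSum hW
      have htend1 := hLsum.tendsto_sum_nat
      have htel : ∀ n, ∑ k ∈ Finset.range n, L (a k) = ((z:Z)) - ((u n : Z)) := by
        intro n
        simp_rw [hLa]
        rw [Finset.sum_range_sub']
        rfl
      rw [funext htel] at htend1
      have htend2 : Tendsto (fun n => ((z:Z)) - ((u n : Z))) atTop (𝓝 ((z:Z))) := by
        have := (tendsto_const_nhds (x := (z:Z)) (f := atTop (α := ℕ))).sub hU0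
        simpa using this
      exact tendsto_nhds_unique htend1 htend2
    refine ⟨w, hLz, ?_⟩
    -- convex combinations approximating w
    have geo : ∀ n, ∑ i ∈ Finset.range n, (2⁻¹:ℝ)^(i+1) = 1 - (2⁻¹:ℝ)^n := by
      intro n
      induction n with
      | zero => simp
      | succ n ih => rw [Finset.sum_range_succ, ih]; ring
    set v : ℕ → X := fun n => (∑ k ∈ Finset.range n, a k) + ((2⁻¹:ℝ)^n) • ω 0 with hvdef
    have hC : Convex ℝ {x : X | Φ x ≤ ((N:ℝ):EReal)} := by
      intro x hx y hy c d hc hd hcd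
      have := hconv x y N N c d hc hd hcd hx hy
      refine this.trans (le_of_eq ?_)
      norm_cast
      rw [← add_mul, hcd, one_mul]
    have hvC : ∀ n, Φ (v n) ≤ ((N:ℝ):EReal) := by
      intro n
      have hmem : v n = ∑ i ∈ Finset.range (n+1),
          (if i < n then (2⁻¹:ℝ)^(i+1) else (2⁻¹:ℝ)^n) • (if i < n then ω i else ω 0) := by
        rw [Finset.sum_range_succ, if_neg (lt_irrefl n), if_neg (lt_irrefl n), hvdef]
        simp only
        congr 1
        apply Finset.sum_congr rfl
        intro i hi
        rw [if_pos (Finset.mem_range.mp hi), if_pos (Finset.mem_range.mp hi)]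
      rw [hmem]
      have hw1 : ∀ i ∈ Finset.range (n+1),
          (0:ℝ) ≤ (if i < n then (2⁻¹:ℝ)^(i+1) else (2⁻¹:ℝ)^n) := by
        intro i _
        by_cases h : i < n <;> simp [h] <;> positivity
      have hw2 : ∑ i ∈ Finset.range (n+1),
          (if i < n then (2⁻¹:ℝ)^(i+1) else (2⁻¹:ℝ)^n) = 1 := by
        rw [Finset.sum_range_succ, if_neg (lt_irrefl n),
          Finset.sum_congr rfl (fun i hi => if_pos (Finset.mem_range.mp hi)), geo n]
        ring
      have hw3 : ∀ i ∈ Finset.range (n+1),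
          (if i < n then ω i else ω 0) ∈ {x : X | Φ x ≤ ((N:ℝ):EReal)} := by
        intro i _
        by_cases h : i < n <;> simp only [h, if_true, if_false]
        · exact (hprop i).2.2
        · exact (hprop 0).2.2
      exact hC.sum_mem hw1 hw2 hw3
    have hvw : Tendsto v atTop (𝓝 w) := by
      have h1 : Tendsto (fun n => ∑ k ∈ Finset.range n, a k) atTop (𝓝 w) := hW.tendsto_sum_nat
      have h2 : Tendsto (fun n:ℕ => ((2⁻¹:ℝ)^n) • ω 0) atTop (𝓝 ((0:ℝ) • ω 0)) := by
        apply Tendsto.smul_const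
        exact tendsto_pow_atTop_nhds_zero_of_lt_one (by norm_num) (by norm_num)
      rw [zero_smul] at h2
      have h3 := h1.add h2
      rw [add_zero] at h3
      exact h3
    exact hcl v w (N:ℝ) hvw hvC
  -- separation
  set T : Set (↥M × ℝ) := {p | ∃ w, L w = ((p.1:Z)) ∧ Φ w ≤ ((p.2:ℝ):EReal)} with hTdef
  have hTconv : Convex ℝ T := by
    rintro ⟨z1, t1⟩ ⟨w1', hw1L, hw1P⟩ ⟨z2, t2⟩ ⟨w2', hw2L, hw2P⟩ a b ha hb hab
    refine ⟨a • w1' + b • w2', ?_, ?_⟩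
    · rw [map_add, map_smul, map_smul, hw1L, hw2L]
      push_cast
      rfl
    · have := hconv w1' w2' t1 t2 a b ha hb hab hw1P hw2P
      simpa using this
  have hB : (Metric.ball (0:↥M) (ρ/2)) ×ˢ (Set.Ioi ((N:ℝ))) ⊆ T := by
    rintro ⟨z, t⟩ ⟨hz, ht⟩
    rw [Metric.mem_ball, dist_zero_right] at hz
    obtain ⟨w, hwL, hwP⟩ := key z hz
    exact ⟨w, hwL, hwP.trans (by exact_mod_cast (le_of_lt ht))⟩
  have hBopen : IsOpen ((Metric.ball (0:↥M) (ρ/2)) ×ˢ (Set.Ioi ((N:ℝ)))) :=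
    Metric.isOpen_ball.prod isOpen_Ioi
  have hq0mem : ((0:↥M), ((N:ℝ)+1)) ∈ (Metric.ball (0:↥M) (ρ/2)) ×ˢ (Set.Ioi ((N:ℝ))) := by
    constructor
    · rw [Metric.mem_ball, dist_zero_right, norm_zero]; positivity
    · exact Set.mem_Ioi.mpr (lt_add_one _)
  have hq0int : ((0:↥M), ((N:ℝ)+1)) ∈ interior T :=
    interior_maximal hB hBopen hq0mem
  have hβnotin : ((0:↥M), β) ∉ interior T := by
    intro hmem
    rw [mem_interior_iff_mem_nhds, Metric.mem_nhds_iff] at hmem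
    obtain ⟨ε, hε, hball⟩ := hmem
    have : ((0:↥M), β - ε/2) ∈ T := by
      apply hball
      rw [Metric.mem_ball, Prod.dist_eq]
      simp [Real.dist_eq, abs_of_pos hε]
      linarith
    obtain ⟨w, hwL, hwP⟩ := this
    have hβle := hge w (by simpa using hwL)
    have : (β:EReal) ≤ ((β - ε/2 : ℝ):EReal) := hβle.trans hwP
    have : β ≤ β - ε/2 := by exact_mod_cast this
    linarith
  obtain ⟨Fl, hFl⟩ := geometric_hahn_banach_open_point (hTconv.interior) isOpen_interior hβnotin
  -- decompose Fl
  set c : ℝ := Fl (0, 1) with hcdef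
  have hdecomp : ∀ (z : ↥M) (t : ℝ), Fl (z, t) = Fl (z, 0) + t * c := by
    intro z t
    have : ((z, t) : ↥M × ℝ) = (z, 0) + t • (0, 1) := by
      simp [Prod.ext_iff]
    rw [this, map_add, map_smul, smul_eq_mul]
  have hF0 : Fl ((0:↥M), 0) = 0 := by
    have : ((0:↥M), (0:ℝ)) = (0 : ↥M × ℝ) := rfl
    rw [this, map_zero]
  have hFβ : Fl (0, β) = β * c := by rw [hdecomp, hF0, zero_add]
  -- Fl ≤ Fl (0, β) on T
  have hTle : ∀ p ∈ T, Fl p ≤ β * c := by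
    intro p hp
    have hseq : ∀ n : ℕ, Fl ((1 - 1/(n+2):ℝ) • p + (1/(n+2):ℝ) • ((0:↥M), ((N:ℝ)+1))) <
        β * c := by
      intro n
      have hn2 : (0:ℝ) < 1/(n+2) := by positivity
      have hn3 : (1/((n:ℝ)+2)) ≤ 1 := by
        rw [div_le_one (by positivity)]
        linarith [Nat.cast_nonneg (α := ℝ) n]
      have hmem := hTconv.combo_closure_interior_mem_interior
        (subset_closure hp) hq0int (by linarith : (0:ℝ) ≤ 1 - 1/(n+2)) hn2 (by ring)
      rw [← hFβ]
      exact hFl _ hmem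
    have htends : Tendsto (fun n : ℕ => Fl ((1 - 1/(n+2):ℝ) • p + (1/(n+2):ℝ) • ((0:↥M), ((N:ℝ)+1))))
        atTop (𝓝 (Fl p)) := by
      have h1 : Tendsto (fun n : ℕ => (1/((n:ℝ)+2))) atTop (𝓝 0) := by
        have h0 : Tendsto (fun n : ℕ => ((n:ℝ)+2)) atTop atTop := by
          simpa using (tendsto_natCast_atTop_atTop (R := ℝ)).atTop_add
            (tendsto_const_nhds (x := (2:ℝ)))
        simpa [Function.comp_def, one_div] using
          (tendsto_inv_atTop_zero (𝕜 := ℝ)).comp h0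
      have h2 : Tendsto (fun n : ℕ => ((1 - 1/(n+2):ℝ) • p + (1/(n+2):ℝ) • ((0:↥M), ((N:ℝ)+1))))
          atTop (𝓝 p) := by
        have := ((tendsto_const_nhds (x := (1:ℝ)) (f := atTop (α := ℕ))).sub h1).smul
          (tendsto_const_nhds (x := p))
        have h3 := this.add (h1.smul (tendsto_const_nhds (x := (((0:↥M), ((N:ℝ)+1)) : ↥M × ℝ))))
        simpa using h3
      exact (Fl.continuous.tendsto p).comp h2
    exact le_of_tendsto htends (Filter.Eventually.of_forall (fun n => (hseq n).le))
  -- c < 0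
  have hcneg : c < 0 := by
    have hc0 : c ≤ 0 := by
      by_contra hc
      push_neg at hc
      set s : ℝ := max t0 (β + 1)
      have hsT : ((0:↥M), s) ∈ T :=
        ⟨w0, by simpa using hw0L, by rw [ht0]; exact_mod_cast le_max_left _ _⟩
      have := hTle _ hsT
      rw [hdecomp, hF0, zero_add] at this
      have hs : β + 1 ≤ s := le_max_right _ _
      nlinarith
    rcases lt_or_eq_of_le hc0 with h | h
    · exact h
    · exfalso
      have := hFl _ hq0int
      rw [hdecomp, hF0, zero_add, hFβ, h] at this
      norm_num at this
  -- the subgradient on M and its extension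
  set φM : ↥M →L[ℝ] ℝ := c⁻¹ • (Fl.comp (ContinuousLinearMap.inl ℝ ↥M ℝ)) with hφMdef
  obtain ⟨ys, hys, -⟩ := exists_extension_norm_eq M φM
  refine ⟨ys, ?_⟩
  intro w
  by_cases hwt : Φ w = ⊤
  · rw [hwt, EReal.top_add_of_ne_bot (by simp : ((ys (L w) : ℝ):EReal) ≠ ⊥)]
    exact le_top
  · obtain ⟨r, hr⟩ : ∃ r : ℝ, Φ w = (r:EReal) :=
      ⟨(Φ w).toReal, (EReal.coe_toReal hwt (hbot w)).symm⟩
    have hzM : L w ∈ M := hdom w hwt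
    have hpT : ((⟨L w, hzM⟩ : ↥M), r) ∈ T := ⟨w, rfl, le_of_eq hr⟩
    have hle := hTle _ hpT
    rw [hdecomp] at hle
    -- β ≤ r + c⁻¹ * Fl (z, 0)
    have hkey : β ≤ r + c⁻¹ * Fl ((⟨L w, hzM⟩ : ↥M), 0) := by
      have h2 := mul_le_mul_of_nonpos_left hle (inv_nonpos.mpr hcneg.le)
      have h3 : c⁻¹ * (β * c) = β := by
        field_simp
        exact mul_div_cancel_left₀ β hcneg.ne
      have h4 : c⁻¹ * (Fl ((⟨L w, hzM⟩ : ↥M), 0) + r * c) =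
          c⁻¹ * Fl ((⟨L w, hzM⟩ : ↥M), 0) + r := by
        rw [mul_add]
        congr 1
        rw [mul_comm r c, ← mul_assoc, inv_mul_cancel₀ hcneg.ne, one_mul]
      rw [h3, h4] at h2
      linarith
    have hysval : ys (L w) = c⁻¹ * Fl ((⟨L w, hzM⟩ : ↥M), 0) := by
      have := hys (⟨L w, hzM⟩ : ↥M)
      rw [hφMdef] at this
      simpa using this
    rw [hr, ← EReal.coe_add]
    exact_mod_cast (by rw [hysval]; exact hkey : β ≤ r + ys (L w))

set_option maxHeartbeats 2000000 in
theorem stmt4 {E F : Type*} [NormedAddCommGroup E] [NormedSpace ℝ E] [CompleteSpace E] [Nontrivial E] [NormedAddCommGroup F] [NormedSpace ℝ F] [CompleteSpace F] [Nontrivial F]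
    (f g : E × F → EReal)
    (hfp : ProperFun f) (hfc : EConvexOn f) (hfl : LowerSemicontinuous f)
    (hgp : ProperFun g) (hgc : EConvexOn g) (hgl : LowerSemicontinuous g)
    (hL : ∃ M : Submodule ℝ E, IsClosed (M : Set E) ∧
      {z : E | ∃ l : ℝ, 0 < l ∧ ∃ p : E × F, g p ≠ ⊤ ∧ ∃ q : E × F, f q ≠ ⊤ ∧
        z = l • (p.1 - q.1)} = (M : Set E))
    (h : E × F → EReal)
    (hdef : ∀ p : E × F, h p = ⨅ v : F, f (p.1, p.2 - v) + g (p.1, v))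
    (hne : ∀ p : E × F, h p ≠ ⊥) :
    ∀ (xs : StrongDual ℝ E) (us : StrongDual ℝ F),
      ∃ ys : StrongDual ℝ E,
        conj2 h (xs, us) = conj2 f (xs - ys, us) + conj2 g (ys, us) ∧
        ∀ zs : StrongDual ℝ E,
          conj2 h (xs, us) ≤ conj2 f (xs - zs, us) + conj2 g (zs, us) := by
  intro xs us
  obtain ⟨M, hMcl, hMset⟩ := hL
  have hS : ∀ z : E, (∃ l : ℝ, 0 < l ∧ ∃ p : E × F, g p ≠ ⊤ ∧ ∃ q : E × F, f q ≠ ⊤ ∧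
      z = l • (p.1 - q.1)) ↔ z ∈ M := fun z => Set.ext_iff.mp hMset z
  have hfb : ∀ p, f p ≠ ⊥ := hfp.2
  have hgb : ∀ p, g p ≠ ⊥ := hgp.2
  have hreal : ∀ (x : EReal), x ≠ ⊥ → x ≠ ⊤ → ∃ r:ℝ, x = (r:EReal) :=
    fun x h1 h2 => ⟨x.toReal, (EReal.coe_toReal h2 h1).symm⟩
  -- the linear map and the perturbation function
  set cL : ((E × F) × (E × F)) →L[ℝ] E :=
    ((ContinuousLinearMap.fst ℝ E F).comp (ContinuousLinearMap.fst ℝ (E × F) (E × F))) -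
    ((ContinuousLinearMap.fst ℝ E F).comp (ContinuousLinearMap.snd ℝ (E × F) (E × F)))
    with hcLdef
  have hcL : ∀ w : (E × F) × (E × F), cL w = w.1.1 - w.2.1 := fun w => rfl
  set cmap : ((E × F) × (E × F)) → ℝ := fun w => xs w.1.1 + us w.1.2 + us w.2.2 with hcmapdef
  set Φ : ((E × F) × (E × F)) → EReal :=
    fun w => f w.1 + g w.2 + ((-(cmap w) : ℝ) : EReal) with hΦdef
  have hΦbot : ∀ w, Φ w ≠ ⊥ := by
    intro w hc
    rcases EReal.add_eq_bot_iff.mp hc with h' | h'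
    · rcases EReal.add_eq_bot_iff.mp h' with h'' | h''
      exacts [hfb _ h'', hgb _ h'']
    · exact (EReal.coe_ne_bot _) h'
  have hΦval : ∀ (w : (E × F) × (E × F)) (r1 r2 : ℝ), f w.1 = (r1:EReal) → g w.2 = (r2:EReal) →
      Φ w = ((r1 + r2 - cmap w : ℝ) : EReal) := by
    intro w r1 r2 h1 h2
    show f w.1 + g w.2 + ((-(cmap w) : ℝ) : EReal) = _
    rw [h1, h2]
    norm_cast
  have hΦtop : ∀ w, Φ w ≠ ⊤ → (f w.1 ≠ ⊤ ∧ g w.2 ≠ ⊤) := by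
    intro w hw
    constructor <;> intro hcon <;> apply hw <;>
      show f w.1 + g w.2 + ((-(cmap w) : ℝ) : EReal) = ⊤
    · rw [hcon, EReal.top_add_of_ne_bot (hgb _), EReal.top_add_of_ne_bot (EReal.coe_ne_bot _)]
    · rw [hcon, EReal.add_top_of_ne_bot (hfb _), EReal.top_add_of_ne_bot (EReal.coe_ne_bot _)]
  have hΦtop' : ∀ w, f w.1 ≠ ⊤ → g w.2 ≠ ⊤ → Φ w ≠ ⊤ := by
    intro w h1 h2
    obtain ⟨r1, hr1⟩ := hreal _ (hfb _) h1
    obtain ⟨r2, hr2⟩ := hreal _ (hgb _) h2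
    rw [hΦval w r1 r2 hr1 hr2]
    exact EReal.coe_ne_top _
  -- common point of the projections of the domains
  obtain ⟨l0, hl0, p0, hp0, q0, hq0, h00⟩ := (hS 0).mpr M.zero_mem
  have hpq : p0.1 = q0.1 := by
    rcases smul_eq_zero.mp h00.symm with hcon | hcon
    · exact absurd hcon hl0.ne'
    · exact sub_eq_zero.mp hcon
  have hgq0 : g (q0.1, p0.2) ≠ ⊤ := by
    rw [show ((q0.1, p0.2) : E × F) = p0 from Prod.ext hpq.symm rfl]
    exact hp0
  -- h is finite somewhere
  obtain ⟨rf0, hrf0⟩ := hreal _ (hfb _) hq0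
  obtain ⟨rg0, hrg0⟩ := hreal _ (hgb _) hgq0
  set pp : E × F := (q0.1, q0.2 + p0.2) with hppdef
  have hupper : h pp ≤ ((rf0 + rg0 : ℝ) : EReal) := by
    rw [hdef pp]
    refine le_trans (iInf_le _ p0.2) ?_
    have h1 : ((pp.1, pp.2 - p0.2) : E × F) = q0 := by
      simp [hppdef]
    rw [h1, hrf0]
    have h2 : ((pp.1, p0.2) : E × F) = (q0.1, p0.2) := rfl
    rw [h2, hrg0]
    norm_cast
  have hppt : h pp ≠ ⊤ := by
    intro hcon
    rw [hcon, top_le_iff] at hupper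
    exact EReal.coe_ne_top _ hupper
  obtain ⟨e0, he0⟩ := hreal _ (hne pp) hppt
  -- weak duality
  have hwd : ∀ zs : StrongDual ℝ E, conj2 h (xs, us) ≤ conj2 f (xs - zs, us) + conj2 g (zs, us) := by
    intro zs
    show (⨆ q : E × F, ((xs q.1 + us q.2 : ℝ) : EReal) - h q) ≤ _
    apply iSup_le
    intro p
    apply ereal_le_of_forall_real_lt
    intro r hr
    by_cases hht : h p = ⊤
    · rw [hht] at hr
      simp at hr
    obtain ⟨e, he⟩ := hreal _ (hne p) hht
    rw [he] at hr
    have hre : r < (xs p.1 + us p.2) - e := by exact_mod_cast hr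
    have hlt : h p < ((xs p.1 + us p.2 - r : ℝ) : EReal) := by
      rw [he]; exact_mod_cast (by linarith : e < xs p.1 + us p.2 - r)
    rw [hdef p] at hlt
    obtain ⟨v, hv⟩ := iInf_lt_iff.mp hlt
    have hft : f (p.1, p.2 - v) ≠ ⊤ := by
      intro hcon
      rw [hcon, EReal.top_add_of_ne_bot (hgb _)] at hv
      exact absurd hv (by simp)
    have hgt : g (p.1, v) ≠ ⊤ := by
      intro hcon
      rw [hcon, EReal.add_top_of_ne_bot (hfb _)] at hv
      exact absurd hv (by simp)
    obtain ⟨r1, hr1⟩ := hreal _ (hfb _) hft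
    obtain ⟨r2, hr2⟩ := hreal _ (hgb _) hgt
    rw [hr1, hr2] at hv
    have hv' : r1 + r2 < xs p.1 + us p.2 - r := by exact_mod_cast hv
    have hb1 : ((((xs - zs) p.1 + us (p.2 - v)) - r1 : ℝ):EReal) ≤ conj2 f (xs - zs, us) := by
      refine le_trans (le_of_eq ?_)
        (le_iSup (fun q : E × F => (((xs - zs) q.1 + us q.2 : ℝ):EReal) - f q) (p.1, p.2 - v))
      rw [hr1]
      norm_cast
    have hb2 : (((zs p.1 + us v) - r2 : ℝ):EReal) ≤ conj2 g (zs, us) := by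
      refine le_trans (le_of_eq ?_)
        (le_iSup (fun q : E × F => ((zs q.1 + us q.2 : ℝ):EReal) - g q) (p.1, v))
      rw [hr2]
      norm_cast
    calc (r:EReal) ≤ ((((xs - zs) p.1 + us (p.2 - v)) - r1 : ℝ):EReal)
          + (((zs p.1 + us v) - r2 : ℝ):EReal) := by
          have e1 : (((xs - zs) p.1 + us (p.2 - v)) - r1) + ((zs p.1 + us v) - r2)
              = (xs p.1 + us p.2) - r1 - r2 := by
            simp only [ContinuousLinearMap.sub_apply, map_sub]
            ring
          have e2 : r ≤ (((xs - zs) p.1 + us (p.2 - v)) - r1) + ((zs p.1 + us v) - r2) := by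
            rw [e1]; linarith
          exact_mod_cast e2
      _ ≤ conj2 f (xs - zs, us) + conj2 g (zs, us) := add_le_add hb1 hb2
  -- alpha
  set α := conj2 h (xs, us) with hαdef
  have hαbot : α ≠ ⊥ := by
    have hterm : ((xs pp.1 + us pp.2 : ℝ):EReal) - h pp ≤ α :=
      le_iSup (fun q : E × F => ((xs q.1 + us q.2 : ℝ) : EReal) - h q) pp
    intro hcon
    rw [hcon, le_bot_iff, he0] at hterm
    have : ((xs pp.1 + us pp.2 - e0 : ℝ):EReal) = ⊥ := by
      rw [EReal.coe_sub]; exact hterm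
    exact EReal.coe_ne_bot _ this
  by_cases hαtop : α = ⊤
  · refine ⟨0, ?_, hwd⟩
    refine le_antisymm (hwd 0) ?_
    rw [hαtop] at *
    exact le_top
  -- main case
  obtain ⟨A, hA⟩ := hreal _ hαbot hαtop
  have hconv : ∀ (w w' : (E × F) × (E × F)) (t t' a b : ℝ), 0 ≤ a → 0 ≤ b → a + b = 1 →
      Φ w ≤ (t:EReal) → Φ w' ≤ (t':EReal) → Φ (a•w + b•w') ≤ ((a*t+b*t' : ℝ):EReal) := by
    intro w w' t t' a b ha hb hab hw hw'
    have hwt : Φ w ≠ ⊤ := fun hcon => by rw [hcon, top_le_iff] at hw; exact EReal.coe_ne_top _ hw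
    have hwt' : Φ w' ≠ ⊤ := fun hcon => by
      rw [hcon, top_le_iff] at hw'; exact EReal.coe_ne_top _ hw'
    obtain ⟨hf1, hg1⟩ := hΦtop w hwt
    obtain ⟨hf2, hg2⟩ := hΦtop w' hwt'
    obtain ⟨r1, hr1⟩ := hreal _ (hfb _) hf1
    obtain ⟨s1, hs1⟩ := hreal _ (hgb _) hg1
    obtain ⟨r2, hr2⟩ := hreal _ (hfb _) hf2
    obtain ⟨s2, hs2⟩ := hreal _ (hgb _) hg2
    have hwle : r1 + s1 - cmap w ≤ t := by
      have h' := hw; rw [hΦval w r1 s1 hr1 hs1] at h'; exact_mod_cast h'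
    have hwle' : r2 + s2 - cmap w' ≤ t' := by
      have h' := hw'; rw [hΦval w' r2 s2 hr2 hs2] at h'; exact_mod_cast h'
    have hfcomb : f (a • w + b • w').1 ≤ ((a*r1 + b*r2 : ℝ):EReal) := by
      have h' := hfc w.1 w'.1 a b ha hb hab
      rw [hr1, hr2] at h'
      refine le_trans h' (le_of_eq ?_)
      norm_cast
    have hgcomb : g (a • w + b • w').2 ≤ ((a*s1 + b*s2 : ℝ):EReal) := by
      have h' := hgc w.2 w'.2 a b ha hb hab
      rw [hs1, hs2] at h'
      refine le_trans h' (le_of_eq ?_)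
      norm_cast
    have hcm : cmap (a • w + b • w') = a * cmap w + b * cmap w' := by
      show xs (a • w.1.1 + b • w'.1.1) + us (a • w.1.2 + b • w'.1.2)
          + us (a • w.2.2 + b • w'.2.2) = _
      rw [map_add, map_add, map_add, map_smul, map_smul, map_smul, map_smul, map_smul, map_smul]
      show a * xs w.1.1 + b * xs w'.1.1 + (a * us w.1.2 + b * us w'.1.2)
          + (a * us w.2.2 + b * us w'.2.2) = _
      ring
    show f (a • w + b • w').1 + g (a • w + b • w').2 + ((-(cmap (a•w+b•w')) : ℝ):EReal) ≤ _
    calc f (a • w + b • w').1 + g (a • w + b • w').2 + ((-(cmap (a•w+b•w')) : ℝ):EReal)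
        ≤ ((a*r1+b*r2:ℝ):EReal) + ((a*s1+b*s2:ℝ):EReal) + ((-(cmap (a•w+b•w')):ℝ):EReal) :=
          add_le_add (add_le_add hfcomb hgcomb) (le_refl _)
      _ = ((a*r1+b*r2 + (a*s1+b*s2) - (a*cmap w + b*cmap w') : ℝ):EReal) := by
          rw [hcm]
          norm_cast
          try ring
      _ ≤ ((a*t+b*t':ℝ):EReal) := by
          have hq1 := mul_le_mul_of_nonneg_left hwle ha
          have hq2 := mul_le_mul_of_nonneg_left hwle' hb
          exact_mod_cast (by nlinarith :
            a*r1+b*r2 + (a*s1+b*s2) - (a*cmap w + b*cmap w') ≤ a*t+b*t')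
  have hclseq : ∀ (v : ℕ → (E × F) × (E × F)) (w : (E × F) × (E × F)) (t : ℝ),
      Tendsto v atTop (nhds w) → (∀ n, Φ (v n) ≤ (t:EReal)) → Φ w ≤ (t:EReal) := by
    intro v w t hv hvb
    by_contra hcon
    push_neg at hcon
    obtain ⟨P, Q, hplt, hqlt, hsum⟩ : ∃ P Q : ℝ, (P:EReal) < f w.1 ∧ (Q:EReal) < g w.2 ∧
        t < P + Q - cmap w := by
      by_cases hft : f w.1 = ⊤
      · by_cases hgt : g w.2 = ⊤
        · refine ⟨(t + cmap w)/2 + 1, (t + cmap w)/2 + 1, by rw [hft]; exact EReal.coe_lt_top _,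
            by rw [hgt]; exact EReal.coe_lt_top _, by linarith⟩
        · obtain ⟨q, hq⟩ := hreal _ (hgb _) hgt
          refine ⟨t + cmap w - q + 2, q - 1, by rw [hft]; exact EReal.coe_lt_top _,
            by rw [hq]; exact_mod_cast (by linarith : q - 1 < q), by linarith⟩
      · obtain ⟨p, hp⟩ := hreal _ (hfb _) hft
        by_cases hgt : g w.2 = ⊤
        · refine ⟨p - 1, t + cmap w - p + 2, by rw [hp]; exact_mod_cast (by linarith : p-1 < p),
            by rw [hgt]; exact EReal.coe_lt_top _, by linarith⟩
        · obtain ⟨q, hq⟩ := hreal _ (hgb _) hgt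
          have ht' : t < p + q - cmap w := by
            have h' := hcon
            rw [hΦval w p q hp hq] at h'
            exact_mod_cast h'
          have hε : (0:ℝ) < (p + q - cmap w - t)/3 := div_pos (by linarith) (by norm_num)
          refine ⟨p - (p + q - cmap w - t)/3, q - (p + q - cmap w - t)/3,
            by rw [hp]; exact_mod_cast (by linarith : p - (p + q - cmap w - t)/3 < p),
            by rw [hq]; exact_mod_cast (by linarith : q - (p + q - cmap w - t)/3 < q),
            by linarith⟩
    have hδpos : 0 < P + Q - cmap w - t := by linarith
    have hv1 : Tendsto (fun n => (v n).1) atTop (𝓝 w.1) := (continuous_fst.tendsto w).comp hv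
    have hv2 : Tendsto (fun n => (v n).2) atTop (𝓝 w.2) := (continuous_snd.tendsto w).comp hv
    have he1 : ∀ᶠ n in atTop, (P:EReal) < f (v n).1 := hv1.eventually (hfl w.1 _ hplt)
    have he2 : ∀ᶠ n in atTop, (Q:EReal) < g (v n).2 := hv2.eventually (hgl w.2 _ hqlt)
    have hccm : Continuous cmap := by
      rw [hcmapdef]
      fun_prop
    have hcm : Tendsto (fun n => cmap (v n)) atTop (𝓝 (cmap w)) := (hccm.tendsto w).comp hv
    have he3 : ∀ᶠ n in atTop, cmap (v n) < P + Q - t := by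
      apply hcm.eventually_lt_const
      linarith
    obtain ⟨n, h1, h2, h3⟩ := (he1.and (he2.and he3)).exists
    have hlt1 : ((P + Q : ℝ):EReal) < f (v n).1 + g (v n).2 := by
      have h' := EReal.add_lt_add h1 h2
      exact lt_of_eq_of_lt (by norm_cast) h'
    have hlt2 : ((P + Q - cmap (v n) : ℝ):EReal) < Φ (v n) := by
      show _ < f (v n).1 + g (v n).2 + ((-(cmap (v n)):ℝ):EReal)
      have h' := EReal.add_lt_add_right_coe hlt1 (-(cmap (v n)))
      refine lt_of_eq_of_lt ?_ h'
      norm_cast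
    have hfinal : (t:EReal) < Φ (v n) := by
      refine lt_trans ?_ hlt2
      exact_mod_cast (by linarith [h3] : t < P + Q - cmap (v n))
    exact absurd (hvb n) (not_le.mpr hfinal)
  have hdom : ∀ w, Φ w ≠ ⊤ → cL w ∈ M := by
    intro w hw
    obtain ⟨hft, hgt⟩ := hΦtop w hw
    have h1 : w.2.1 - w.1.1 ∈ M := (hS _).mp ⟨1, one_pos, w.2, hgt, w.1, hft, (one_smul _ _).symm⟩
    have h2 := M.neg_mem h1
    rw [neg_sub] at h2
    rw [hcL]
    exact h2
  have hcov : ∀ z ∈ M, ∃ l : ℝ, 0 < l ∧ ∃ w, Φ w ≠ ⊤ ∧ z = l • cL w := by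
    intro z hz
    obtain ⟨l, hl, p, hp, q, hq, hzz⟩ := (hS (-z)).mpr (M.neg_mem hz)
    refine ⟨l, hl, (q, p), hΦtop' _ hq hp, ?_⟩
    rw [hcL]
    calc z = -(-z) := (neg_neg z).symm
      _ = -(l • (p.1 - q.1)) := by rw [← hzz]
      _ = l • ((q, p).1.1 - (q, p).2.1) := by rw [← smul_neg, neg_sub]
  have hfin : ∃ w, cL w = 0 ∧ Φ w ≠ ⊤ := by
    refine ⟨(q0, (q0.1, p0.2)), ?_, hΦtop' _ hq0 hgq0⟩
    rw [hcL]
    simp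
  have hge : ∀ w, cL w = 0 → ((-A : ℝ):EReal) ≤ Φ w := by
    intro w hw
    by_cases hwt : Φ w = ⊤
    · rw [hwt]; exact le_top
    obtain ⟨hft, hgt⟩ := hΦtop w hwt
    obtain ⟨r1, hr1⟩ := hreal _ (hfb _) hft
    obtain ⟨r2, hr2⟩ := hreal _ (hgb _) hgt
    have heq : w.1.1 = w.2.1 := sub_eq_zero.mp (by rw [← hcL w]; exact hw)
    set p : E × F := (w.1.1, w.1.2 + w.2.2) with hpdef
    have hhle : h p ≤ ((r1 + r2 : ℝ):EReal) := by
      rw [hdef p]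
      refine le_trans (iInf_le _ w.2.2) ?_
      have h1 : ((p.1, p.2 - w.2.2) : E × F) = w.1 := by
        simp [hpdef]
      have h2 : ((p.1, w.2.2) : E × F) = w.2 := Prod.ext heq rfl
      rw [h1, h2, hr1, hr2]
      norm_cast
    have hterm : ((xs p.1 + us p.2 : ℝ):EReal) - h p ≤ α :=
      le_iSup (fun q : E × F => ((xs q.1 + us q.2 : ℝ) : EReal) - h q) p
    have hterm2 : ((xs p.1 + us p.2 : ℝ):EReal) - ((r1+r2:ℝ):EReal) ≤ ((A:ℝ):EReal) := by
      refine le_trans (EReal.sub_le_sub (le_refl _) hhle) (le_trans hterm (le_of_eq hA))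
    have hterm3 : xs p.1 + us p.2 - (r1 + r2) ≤ A := by exact_mod_cast hterm2
    rw [hΦval w r1 r2 hr1 hr2]
    have : -A ≤ r1 + r2 - cmap w := by
      have hcm : cmap w = xs w.1.1 + us w.1.2 + us w.2.2 := rfl
      have hp2 : us p.2 = us w.1.2 + us w.2.2 := by rw [hpdef]; exact map_add us _ _
      have hp1 : xs p.1 = xs w.1.1 := rfl
      rw [hcm]
      rw [hp2, hp1] at hterm3
      linarith
    exact_mod_cast this
  obtain ⟨ys, hys⟩ := core Φ hΦbot hconv hclseq cL M hMcl hdom hcov (-A) hge hfin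
  refine ⟨ys, ?_, hwd⟩
  refine le_antisymm (hwd ys) ?_
  rw [hA]
  show (⨆ a : E × F, (((xs - ys) a.1 + us a.2 : ℝ):EReal) - f a)
      + (⨆ b : E × F, ((ys b.1 + us b.2 : ℝ):EReal) - g b) ≤ ((A:ℝ):EReal)
  apply ereal_sup_add_sup_le
  intro a b
  refine le_trans (ereal_split _ _ _ _ (hfb a) (hgb b)) ?_
  by_cases hft : f a = ⊤
  · rw [hft, EReal.top_add_of_ne_bot (hgb b)]
    simp
  by_cases hgt : g b = ⊤
  · rw [hgt, EReal.add_top_of_ne_bot (hfb a)]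
    simp
  obtain ⟨r1, hr1⟩ := hreal _ (hfb a) hft
  obtain ⟨r2, hr2⟩ := hreal _ (hgb b) hgt
  have hcore := hys (a, b)
  rw [hΦval (a,b) r1 r2 hr1 hr2, hcL] at hcore
  have hcore' : -A ≤ (r1 + r2 - cmap (a,b)) + ys ((a,b).1.1 - (a,b).2.1) := by
    exact_mod_cast hcore
  rw [hr1, hr2]
  have hfinal : (((xs - ys) a.1 + us a.2) + (ys b.1 + us b.2)) - (r1 + r2) ≤ A := by
    have hcm : cmap (a,b) = xs a.1 + us a.2 + us b.2 := rfl
    have hysab : ys ((a,b).1.1 - (a,b).2.1) = ys a.1 - ys b.1 := map_sub ys _ _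
    rw [hcm, hysab] at hcore'
    simp only [ContinuousLinearMap.sub_apply]
    linarith
  calc (((xs - ys) a.1 + us a.2 + (ys b.1 + us b.2) : ℝ) : EReal) - ((r1:EReal) + (r2:EReal))
      = ((((xs - ys) a.1 + us a.2 + (ys b.1 + us b.2)) - (r1 + r2) : ℝ) : EReal) := by norm_cast
    _ ≤ ((A:ℝ):EReal) := by exact_mod_cast hfinal
end
end

section
/- Let E be a nonzero Banach space, K a nonempty weak-compact convex subset of E, y* ∈ E*, and define h_{K,y*}(x,x*) := I_K(x) + ⟨x,y*⟩ + sup⟨K, x* − y*⟩ on E × E*. Then h_{K,y*}*(x*,x**) = sup⟨K, x* − y*⟩ + I_{K̂}(x**) + ⟨y*,x**⟩, and consequently h_{K,y*} is a strongly representative function on E × E*. -/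
open NormedSpace Set
open scoped Classical

noncomputable section

namespace Stmt5Aux

variable {E : Type*} [NormedAddCommGroup E] [NormedSpace ℝ E]

/-- The support function. -/
def sigK (K : Set E) (w : StrongDual ℝ E) : ℝ := sSup ((fun k : E => w k) '' K)

theorem exists_max {K : Set E} (hK : K.Nonempty) (hKcpt : IsCompact (toWeakSpace ℝ E '' K))
    (w : StrongDual ℝ E) : ∃ k ∈ K, ∀ k' ∈ K, w k' ≤ w k := by
  have hc : Continuous fun y : WeakSpace ℝ E => w ((toWeakSpace ℝ E).symm y) :=
    WeakBilin.eval_continuous ((topDualPairing ℝ E).flip) w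
  obtain ⟨y, hy, hmax⟩ := hKcpt.exists_isMaxOn (hK.image _) hc.continuousOn
  obtain ⟨k, hk, rfl⟩ := hy
  refine ⟨k, hk, fun k' hk' => ?_⟩
  have := hmax (Set.mem_image_of_mem _ hk')
  simpa using this

theorem le_sig {K : Set E} (hK : K.Nonempty) (hKcpt : IsCompact (toWeakSpace ℝ E '' K))
    {w : StrongDual ℝ E} {k : E} (hk : k ∈ K) : w k ≤ sigK K w := by
  obtain ⟨m, hm, hmax⟩ := exists_max hK hKcpt w
  exact le_csSup ⟨w m, by rintro r ⟨k', hk', rfl⟩; exact hmax k' hk'⟩ ⟨k, hk, rfl⟩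

theorem sig_le {K : Set E} (hK : K.Nonempty) {w : StrongDual ℝ E} {c : ℝ}
    (h : ∀ k ∈ K, w k ≤ c) : sigK K w ≤ c :=
  csSup_le (hK.image _) (by rintro r ⟨k, hk, rfl⟩; exact h k hk)

theorem sig_zero {K : Set E} (hK : K.Nonempty) (hKcpt : IsCompact (toWeakSpace ℝ E '' K)) :
    sigK K (0 : StrongDual ℝ E) = 0 := by
  have hK' := hK
  obtain ⟨k0, hk0⟩ := hK'
  refine le_antisymm (sig_le hK fun k' _ => by simp) ?_
  simpa using le_sig hK hKcpt hk0 (w := 0)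

theorem sig_smul_le {K : Set E} (hK : K.Nonempty) (hKcpt : IsCompact (toWeakSpace ℝ E '' K))
    {t : ℝ} (ht : 0 ≤ t) (v : StrongDual ℝ E) : sigK K (t • v) ≤ t * sigK K v := by
  refine sig_le hK fun k hk => ?_
  have := le_sig hK hKcpt hk (w := v)
  calc (t • v) k = t * v k := by simp
  _ ≤ t * sigK K v := by nlinarith

/-- Goldstine-type lemma: any bidual element dominated by the support function of a
weakly compact convex set belongs to the canonical image of the set. -/
theorem mem_image_bidual {K : Set E} (hK : K.Nonempty) (hKconv : Convex ℝ K)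
    (hKcpt : IsCompact (toWeakSpace ℝ E '' K)) (z : StrongDual ℝ (StrongDual ℝ E))
    (hz : ∀ v : StrongDual ℝ E, z v ≤ sigK K v) : z ∈ inclusionInDoubleDual ℝ E '' K := by
  -- finite intersection property
  have hfin : ∀ S : Finset (StrongDual ℝ E), ∃ k ∈ K, ∀ v ∈ S, v k = z v := by
    intro S
    classical
    set ι := {v // v ∈ S}
    set L : E →ₗ[ℝ] (ι → ℝ) := LinearMap.pi fun v : ι => ((v : StrongDual ℝ E) : E →ₗ[ℝ] ℝ) with hL
    set Q : Set (ι → ℝ) := L '' K with hQ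
    have hQconv : Convex ℝ Q := hKconv.linear_image L
    have hQcpt : IsCompact Q := by
      have hg : Continuous fun y : WeakSpace ℝ E =>
          (fun v : ι => (v : StrongDual ℝ E) ((toWeakSpace ℝ E).symm y)) :=
        continuous_pi fun v => WeakBilin.eval_continuous ((topDualPairing ℝ E).flip) _
      have : Q = (fun y : WeakSpace ℝ E => fun v : ι => (v : StrongDual ℝ E)
          ((toWeakSpace ℝ E).symm y)) '' (toWeakSpace ℝ E '' K) := by
        rw [Set.image_image]; rfl
      rw [this]
      exact hKcpt.image hg
    have hQclosed : IsClosed Q := hQcpt.isClosed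
    by_cases hc : (fun v : ι => z v) ∈ Q
    · obtain ⟨k, hk, hLk⟩ := hc
      exact ⟨k, hk, fun v hv => congrFun hLk ⟨v, hv⟩⟩
    · exfalso
      obtain ⟨f, u, hfa, hfc⟩ := geometric_hahn_banach_closed_point hQconv hQclosed hc
      set e : ι → (ι → ℝ) := fun i => fun j => if i = j then 1 else 0 with he
      have key : ∀ x : ι → ℝ, f x = ∑ i : ι, x i * f (e i) := by
        intro x
        conv_lhs => rw [pi_eq_sum_univ x]
        rw [map_sum]
        simp [smul_eq_mul, he]
      set v₀ : StrongDual ℝ E := ∑ i : ι, f (e i) • (i : StrongDual ℝ E) with hv₀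
      have hv₀k : ∀ k : E, v₀ k = f (L k) := by
        intro k
        rw [key (L k)]
        simp only [hv₀, ContinuousLinearMap.sum_apply, ContinuousLinearMap.coe_smul',
          Pi.smul_apply, smul_eq_mul]
        refine Finset.sum_congr rfl fun i _ => ?_
        have : L k i = (i : StrongDual ℝ E) k := rfl
        rw [this, mul_comm]
      have hzv₀ : z v₀ = f (fun v : ι => z v) := by
        rw [key]
        simp only [hv₀, map_sum, map_smul, smul_eq_mul]
        exact Finset.sum_congr rfl fun i _ => mul_comm _ _
      have h1 : sigK K v₀ ≤ u := by
        refine sig_le hK fun k hk => ?_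
        rw [hv₀k k]
        exact (hfa _ ⟨k, hk, rfl⟩).le
      have h2 : u < z v₀ := by rw [hzv₀]; exact hfc
      have h3 := hz v₀
      linarith
  -- compactness argument
  have hcl : ∀ v : StrongDual ℝ E,
      IsClosed {y : WeakSpace ℝ E | v ((toWeakSpace ℝ E).symm y) = z v} := by
    intro v
    exact isClosed_eq (WeakBilin.eval_continuous ((topDualPairing ℝ E).flip) v) continuous_const
  have hne := hKcpt.inter_iInter_nonempty
    (fun v : StrongDual ℝ E => {y : WeakSpace ℝ E | v ((toWeakSpace ℝ E).symm y) = z v}) hcl ?_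
  · obtain ⟨y, hyK, hy⟩ := hne
    obtain ⟨k, hk, rfl⟩ := hyK
    refine ⟨k, hk, ?_⟩
    ext v
    have := Set.mem_iInter.mp hy v
    simpa [NormedSpace.dual_def] using this
  · intro S
    obtain ⟨k, hk, hkv⟩ := hfin S
    refine ⟨toWeakSpace ℝ E k, Set.mem_image_of_mem _ hk, ?_⟩
    simp only [Set.mem_iInter]
    intro v hv
    simpa using hkv v hv

theorem isClosed_of_weak_cpt {K : Set E} (hK : K.Nonempty) (hKconv : Convex ℝ K)
    (hKcpt : IsCompact (toWeakSpace ℝ E '' K)) : IsClosed K := by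
  refine isClosed_of_closure_subset fun x hx => ?_
  have hxle : ∀ v : StrongDual ℝ E, v x ≤ sigK K v := by
    intro v
    have h1 : v x ∈ v '' closure K := Set.mem_image_of_mem _ hx
    have h2 : v '' closure K ⊆ closure (v '' K) :=
      (image_closure_subset_closure_image v.continuous)
    have h3 : closure ((v : E → ℝ) '' K) ⊆ Set.Iic (sigK K v) := by
      refine closure_minimal ?_ isClosed_Iic
      rintro r ⟨k, hk, rfl⟩
      exact le_sig hK hKcpt hk
    exact h3 (h2 h1)
  have hmem : inclusionInDoubleDual ℝ E x ∈ inclusionInDoubleDual ℝ E '' K := by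
    refine mem_image_bidual hK hKconv hKcpt _ fun v => ?_
    simpa [NormedSpace.dual_def] using hxle v
  obtain ⟨k, hk, hkx⟩ := hmem
  have hinj : Function.Injective (inclusionInDoubleDual ℝ E) :=
    (inclusionInDoubleDualLi ℝ (E := E)).injective
  rwa [← hinj hkx]

end Stmt5Aux

namespace Stmt5Aux

variable {E : Type*} [NormedAddCommGroup E] [NormedSpace ℝ E]

theorem hfun_mem {K : Set E} {ys : StrongDual ℝ E} {p : E × StrongDual ℝ E} (hp : p.1 ∈ K) :
    hfun K ys p = ((ys p.1 + sigK K (p.2 - ys) : ℝ) : EReal) := by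
  simp [hfun, sigK, hp, EReal.coe_add]

theorem hfun_not {K : Set E} {ys : StrongDual ℝ E} {p : E × StrongDual ℝ E} (hp : p.1 ∉ K) :
    hfun K ys p = ⊤ := by
  simp [hfun, hp]

theorem hfun_ne_bot (K : Set E) (ys : StrongDual ℝ E) (p : E × StrongDual ℝ E) :
    hfun K ys p ≠ ⊥ := by
  by_cases hp : p.1 ∈ K
  · rw [hfun_mem hp]; exact EReal.coe_ne_bot _
  · rw [hfun_not hp]; exact top_ne_bot

end Stmt5Aux

open Stmt5Aux in
set_option maxHeartbeats 1000000 in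
theorem stmt5' {E : Type*} [NormedAddCommGroup E] [NormedSpace ℝ E] [CompleteSpace E] [Nontrivial E]
    (K : Set E) (hK : K.Nonempty) (hKconv : Convex ℝ K)
    (hKcpt : IsCompact (toWeakSpace ℝ E '' K)) (ys : StrongDual ℝ E) :
    (∀ p : StrongDual ℝ E × StrongDual ℝ (StrongDual ℝ E),
      conj2 (hfun K ys) p =
        ((sSup ((fun k : E => (p.1 - ys) k) '' K) : ℝ) : EReal)
          + (if p.2 ∈ inclusionInDoubleDual ℝ E '' K then (0 : EReal) else ⊤)
          + ((p.2 ys : ℝ) : EReal)) ∧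
    IsStrongRep (hfun K ys) := by
  have hclosed : IsClosed K := isClosed_of_weak_cpt hK hKconv hKcpt
  -- Part 1: the conjugate formula
  have part1 : ∀ p : StrongDual ℝ E × StrongDual ℝ (StrongDual ℝ E),
      conj2 (hfun K ys) p =
        ((sigK K (p.1 - ys) : ℝ) : EReal)
          + (if p.2 ∈ inclusionInDoubleDual ℝ E '' K then (0 : EReal) else ⊤)
          + ((p.2 ys : ℝ) : EReal) := by
    rintro ⟨p1, p2⟩
    obtain ⟨km, hkm, hmax⟩ := exists_max hK hKcpt (p1 - ys)
    have hA : sigK K (p1 - ys) = (p1 - ys) km :=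
      le_antisymm (sig_le hK hmax) (le_sig hK hKcpt hkm)
    by_cases hp : p2 ∈ inclusionInDoubleDual ℝ E '' K
    · obtain ⟨k₀, hk₀, rfl⟩ := hp
      rw [if_pos (Set.mem_image_of_mem _ hk₀)]
      have hval : ((sigK K (p1 - ys) : ℝ) : EReal) + 0
          + (((inclusionInDoubleDual ℝ E k₀) ys : ℝ) : EReal)
          = ((sigK K (p1 - ys) + ys k₀ : ℝ) : EReal) := by
        rw [add_zero, ← EReal.coe_add, NormedSpace.dual_def]
      rw [hval, conj2]
      refine le_antisymm (iSup_le fun q => ?_) ?_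
      · by_cases hq : q.1 ∈ K
        · rw [hfun_mem hq, ← EReal.coe_sub, EReal.coe_le_coe_iff, NormedSpace.dual_def]
          have h1 : p1 q.1 - ys q.1 ≤ sigK K (p1 - ys) := by
            have := le_sig hK hKcpt hq (w := p1 - ys)
            simpa using this
          have h2 : q.2 k₀ - ys k₀ ≤ sigK K (q.2 - ys) := by
            have := le_sig hK hKcpt hk₀ (w := q.2 - ys)
            simpa using this
          linarith
        · rw [hfun_not hq]
          simp
      · refine le_iSup_of_le (km, ys) ?_
        rw [hfun_mem (show (km, ys).1 ∈ K from hkm)]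
        have : ((km, ys).2 : StrongDual ℝ E) - ys = 0 := sub_self ys
        rw [this, sig_zero hK hKcpt, ← EReal.coe_sub, EReal.coe_le_coe_iff,
          NormedSpace.dual_def]
        have hsub : (p1 - ys) km = p1 km - ys km := by simp
        rw [hA]
        simp only []
        linarith [hsub]
    · rw [if_neg hp]
      have hRhs : ((sigK K (p1 - ys) : ℝ) : EReal) + ⊤ + ((p2 ys : ℝ) : EReal) = ⊤ := by
        rw [EReal.coe_add_top, EReal.top_add_coe]
      rw [hRhs]
      -- find a separating functional
      have hsep : ∃ v : StrongDual ℝ E, sigK K v < p2 v := by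
        by_contra hcon
        push_neg at hcon
        exact hp (mem_image_bidual hK hKconv hKcpt p2 fun v => hcon v)
      obtain ⟨v, hv⟩ := hsep
      set δ : ℝ := p2 v - sigK K v with hδ
      have hδpos : 0 < δ := by simp [hδ]; linarith
      rw [conj2, iSup_eq_top]
      intro b hb
      obtain ⟨r, hbr, -⟩ := EReal.lt_iff_exists_real_btwn.mp hb
      set C : ℝ := p1 km + p2 ys - ys km with hC
      set t : ℝ := max 0 ((r - C) / δ) with ht
      have ht0 : 0 ≤ t := le_max_left _ _
      have htδ : r - C ≤ t * δ := by
        have h1 : (r - C) / δ ≤ t := le_max_right _ _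
        have := mul_le_mul_of_nonneg_right h1 hδpos.le
        rwa [div_mul_cancel₀ _ hδpos.ne'] at this
      refine ⟨(km, ys + t • v), ?_⟩
      rw [hfun_mem (show (km, ys + t • v).1 ∈ K from hkm)]
      have hsub2 : ((km, ys + t • v).2 : StrongDual ℝ E) - ys = t • v := by
        simp
      rw [hsub2, ← EReal.coe_sub]
      refine lt_of_lt_of_le hbr (EReal.coe_le_coe_iff.mpr ?_)
      have hst : sigK K (t • v) ≤ t * sigK K v := sig_smul_le hK hKcpt ht0 v
      have hp2 : p2 (ys + t • v) = p2 ys + t * p2 v := by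
        rw [map_add, map_smul, smul_eq_mul]
      simp only []
      rw [hp2]
      nlinarith
  refine ⟨fun p => part1 p, ?_⟩
  constructor
  · refine ⟨⟨?_, ?_⟩, ?_, ?_, ?_⟩
    · -- proper: somewhere finite
      obtain ⟨k, hk⟩ := hK
      refine ⟨(k, ys), ?_⟩
      rw [hfun_mem (show ((k, ys) : E × StrongDual ℝ E).1 ∈ K from hk)]
      exact EReal.coe_ne_top _
    · exact hfun_ne_bot K ys
    · -- convexity
      intro x y a b ha hb hab
      rcases eq_or_lt_of_le ha with rfl | ha'
      · have hb1 : b = 1 := by linarith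
        subst hb1
        simp [zero_smul, one_smul, zero_add]
      rcases eq_or_lt_of_le hb with rfl | hb'
      · have ha1 : a = 1 := by linarith
        subst ha1
        simp [zero_smul, one_smul, add_zero]
      by_cases hx : x.1 ∈ K
      · by_cases hy : y.1 ∈ K
        · have hcomb : (a • x + b • y).1 ∈ K := by
            have := hKconv hx hy ha hb hab
            simpa using this
          rw [hfun_mem hcomb, hfun_mem hx, hfun_mem hy, ← EReal.coe_mul, ← EReal.coe_mul,
            ← EReal.coe_add, EReal.coe_le_coe_iff]
          have hfst : (a • x + b • y).1 = a • x.1 + b • y.1 := rfl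
          have hsnd : (a • x + b • y).2 = a • x.2 + b • y.2 := rfl
          have hysq : ys ((a • x + b • y).1) = a * ys x.1 + b * ys y.1 := by
            rw [hfst, map_add, map_smul, map_smul, smul_eq_mul, smul_eq_mul]
          have hshift : (a • x + b • y).2 - ys = a • (x.2 - ys) + b • (y.2 - ys) := by
            have h : a • (x.2 - ys) + b • (y.2 - ys)
                = a • x.2 + b • y.2 - (a + b) • ys := by
              rw [smul_sub, smul_sub, add_smul]; abel
            rw [hsnd, h, hab, one_smul]
          have hsig : sigK K ((a • x + b • y).2 - ys)
              ≤ a * sigK K (x.2 - ys) + b * sigK K (y.2 - ys) := by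
            rw [hshift]
            refine sig_le hK fun k hk => ?_
            have h1 := le_sig hK hKcpt hk (w := x.2 - ys)
            have h2 := le_sig hK hKcpt hk (w := y.2 - ys)
            have : (a • (x.2 - ys) + b • (y.2 - ys)) k
                = a * ((x.2 - ys) k) + b * ((y.2 - ys) k) := by simp
            rw [this]
            nlinarith
          rw [hysq]
          linarith
        · -- y off K : RHS is ⊤
          have h1 : ((b : ℝ) : EReal) * hfun K ys y = ⊤ := by
            rw [hfun_not hy]
            exact EReal.mul_top_of_pos (by exact_mod_cast hb')
          rw [h1, EReal.add_top_of_ne_bot]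
          · exact le_top
          · -- a * f x ≠ ⊥
            by_cases hx' : x.1 ∈ K
            · rw [hfun_mem hx', ← EReal.coe_mul]; exact EReal.coe_ne_bot _
            · rw [hfun_not hx', EReal.mul_top_of_pos (by exact_mod_cast ha')]
              exact top_ne_bot
      · have h1 : ((a : ℝ) : EReal) * hfun K ys x = ⊤ := by
          rw [hfun_not hx]
          exact EReal.mul_top_of_pos (by exact_mod_cast ha')
        rw [h1, EReal.top_add_of_ne_bot]
        · exact le_top
        · by_cases hy' : y.1 ∈ K
          · rw [hfun_mem hy', ← EReal.coe_mul]; exact EReal.coe_ne_bot _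
          · rw [hfun_not hy', EReal.mul_top_of_pos (by exact_mod_cast hb')]
            exact top_ne_bot
    · -- lower semicontinuity
      intro p y hy
      by_cases hp : p.1 ∈ K
      · rw [hfun_mem hp] at hy
        obtain ⟨k₀, hk₀, hmax₀⟩ := exists_max hK hKcpt (p.2 - ys)
        have hA : sigK K (p.2 - ys) = (p.2 - ys) k₀ :=
          le_antisymm (sig_le hK hmax₀) (le_sig hK hKcpt hk₀)
        set g : E × StrongDual ℝ E → ℝ := fun q => ys q.1 + (q.2 k₀ - ys k₀) with hg
        have hgc : Continuous g := by
          have h1 : Continuous fun q : E × StrongDual ℝ E => (q.2 : StrongDual ℝ E) k₀ :=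
            (inclusionInDoubleDual ℝ E k₀).continuous.comp continuous_snd
          exact (ys.continuous.comp continuous_fst).add (h1.sub continuous_const)
        have hy' : y < ((g p : ℝ) : EReal) := by
          have : g p = ys p.1 + sigK K (p.2 - ys) := by
            rw [hg, hA]; simp
          rw [this]; exact hy
        have hcont : Continuous fun q : E × StrongDual ℝ E => ((g q : ℝ) : EReal) :=
          continuous_coe_real_ereal.comp hgc
        have hmem : p ∈ (fun q : E × StrongDual ℝ E => ((g q : ℝ) : EReal)) ⁻¹' (Set.Ioi y) := hy'
        filter_upwards [(hcont.isOpen_preimage _ isOpen_Ioi).mem_nhds hmem] with q hq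
        by_cases hq1 : q.1 ∈ K
        · rw [hfun_mem hq1]
          refine lt_of_lt_of_le hq (EReal.coe_le_coe_iff.mpr ?_)
          have h2 : q.2 k₀ - ys k₀ ≤ sigK K (q.2 - ys) := by
            have := le_sig hK hKcpt hk₀ (w := q.2 - ys)
            simpa using this
          simp only [hg]
          linarith
        · rw [hfun_not hq1]; exact lt_of_lt_of_le hq le_top
      · rw [hfun_not hp] at hy
        have : ∀ᶠ q : E × StrongDual ℝ E in nhds p, q.1 ∉ K := by
          have hopen : IsOpen (Kᶜ) := hclosed.isOpen_compl
          exact continuous_fst.continuousAt.preimage_mem_nhds (hopen.mem_nhds hp)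
        filter_upwards [this] with q hq
        rw [hfun_not hq]; exact hy
    · -- pairing inequality
      intro q
      by_cases hq : q.1 ∈ K
      · rw [hfun_mem hq, EReal.coe_le_coe_iff]
        have := le_sig hK hKcpt hq (w := q.2 - ys)
        have h1 : (q.2 - ys) q.1 = q.2 q.1 - ys q.1 := by simp
        linarith
      · rw [hfun_not hq]; exact le_top
  · -- strong representativity
    intro p
    rw [part1 p]
    by_cases hp : p.2 ∈ inclusionInDoubleDual ℝ E '' K
    · rw [if_pos hp, add_zero]
      obtain ⟨k, hk, hkp⟩ := hp
      rw [← hkp, NormedSpace.dual_def, NormedSpace.dual_def,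
        ← EReal.coe_add, EReal.coe_le_coe_iff]
      have := le_sig hK hKcpt hk (w := p.1 - ys)
      have h1 : (p.1 - ys) k = p.1 k - ys k := by simp
      linarith
    · rw [if_neg hp, EReal.coe_add_top, EReal.top_add_coe]
      exact le_top


theorem stmt5 {E : Type*} [NormedAddCommGroup E] [NormedSpace ℝ E] [CompleteSpace E] [Nontrivial E]
    (K : Set E) (hK : K.Nonempty) (hKconv : Convex ℝ K)
    (hKcpt : IsCompact (toWeakSpace ℝ E '' K)) (ys : StrongDual ℝ E) :
    (∀ p : StrongDual ℝ E × StrongDual ℝ (StrongDual ℝ E),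
      conj2 (hfun K ys) p =
        ((sSup ((fun k : E => (p.1 - ys) k) '' K) : ℝ) : EReal)
          + (if p.2 ∈ inclusionInDoubleDual ℝ E '' K then (0 : EReal) else ⊤)
          + ((p.2 ys : ℝ) : EReal)) ∧
    IsStrongRep (hfun K ys) := by
  exact stmt5' K hK hKconv hKcpt ys
end
end

section
/- Let E be a nonzero Banach space, y ∈ E, K a nonempty weak*-compact convex subset of E*, and define g_{y,K}(x,x*) := sup⟨x − y, K⟩ + I_K(x*) + ⟨y,x*⟩ on E × E*. Then g_{y,K}*(x*,x**) = I_K(x*) + ⟨y,x*⟩ + sup⟨K, x** − ŷ⟩, and consequently g_{y,K} is a strongly representative function on E × E*. -/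
open NormedSpace Set
open scoped Classical

noncomputable section

/- ===== auxiliary lemmas ===== -/

lemma weakDual_dual_eval {E : Type*} [NormedAddCommGroup E] [NormedSpace ℝ E]
    (f : WeakDual ℝ E →L[ℝ] ℝ) : ∃ x : E, ∀ k : WeakDual ℝ E, f k = k x := by
  have hp := (topDualPairing ℝ E).weakBilin_withSeminorms
  let q : Seminorm ℝ (WeakBilin (topDualPairing ℝ E)) :=
    (normSeminorm ℝ ℝ).comp (f.toLinearMap : WeakBilin (topDualPairing ℝ E) →ₗ[ℝ] ℝ)
  have hqc : Continuous q := by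
    have h1 : Continuous fun k : WeakDual ℝ E => ‖f k‖ := f.continuous.norm
    exact h1
  obtain ⟨s, C, hC0, hle⟩ := Seminorm.bound_of_continuous hp q hqc
  have hker : (⨅ i : s, LinearMap.ker ((topDualPairing ℝ E).flip (i : E)))
      ≤ LinearMap.ker (f.toLinearMap : WeakBilin (topDualPairing ℝ E) →ₗ[ℝ] ℝ) := by
    intro k hk
    simp only [Submodule.mem_iInf, LinearMap.mem_ker] at hk ⊢
    have h0 : (s.sup (topDualPairing ℝ E).toSeminormFamily) k ≤ 0 := by
      refine Seminorm.finset_sup_apply_le le_rfl fun i hi => ?_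
      have hki : topDualPairing ℝ E k i = 0 := hk ⟨i, hi⟩
      simp [LinearMap.toSeminormFamily_apply, hki]
    have h2 := hle k
    have h3 : (C • s.sup (topDualPairing ℝ E).toSeminormFamily) k ≤ 0 := by
      have : ((C : ℝ) : ℝ) * (s.sup (topDualPairing ℝ E).toSeminormFamily) k ≤ 0 :=
        mul_nonpos_of_nonneg_of_nonpos C.coe_nonneg h0
      simpa [Seminorm.smul_apply, NNReal.smul_def, smul_eq_mul] using this
    have h4 : ‖f k‖ ≤ 0 := le_trans h2 h3
    exact norm_le_zero_iff.mp h4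
  have hmem := mem_span_of_iInf_ker_le_ker (L := fun i : s => (topDualPairing ℝ E).flip (i : E))
    (K := (f.toLinearMap : WeakBilin (topDualPairing ℝ E) →ₗ[ℝ] ℝ)) hker
  obtain ⟨c, hc⟩ := (Submodule.mem_span_range_iff_exists_fun ℝ).1 hmem
  refine ⟨∑ i : s, c i • (i : E), fun k => ?_⟩
  have h5 := LinearMap.congr_fun hc k
  simp only [LinearMap.coe_sum, Finset.sum_apply, LinearMap.smul_apply,
    LinearMap.flip_apply, topDualPairing_apply, smul_eq_mul] at h5
  have h6 : k (∑ i : s, c i • (i : E)) = ∑ i : s, c i * k i := by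
    rw [map_sum]
    refine Finset.sum_congr rfl fun i _ => ?_
    rw [map_smul, smul_eq_mul]
  have h7 : f k = ∑ i : s, c i * k i := by
    refine h5.symm.trans ?_
    exact (Finset.sum_apply _ _ _).trans (Finset.sum_congr rfl fun i _ => rfl)
  rw [h7, h6]

lemma normBoundOfCompact {E : Type*} [NormedAddCommGroup E] [NormedSpace ℝ E] [CompleteSpace E]
    {K : Set (StrongDual ℝ E)} (hKcpt : IsCompact (StrongDual.toWeakDual '' K)) :
    ∃ C : ℝ, 0 ≤ C ∧ ∀ k ∈ K, ‖k‖ ≤ C := by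
  have h : ∀ x : E, ∃ C, ∀ i : K, ‖(i : StrongDual ℝ E) x‖ ≤ C := by
    intro x
    have hc : Continuous fun k : WeakDual ℝ E => ‖k x‖ := (WeakDual.eval_continuous x).norm
    obtain ⟨C, hC⟩ := (hKcpt.image hc).bddAbove
    exact ⟨C, fun i => hC (mem_image_of_mem _ (mem_image_of_mem _ i.2))⟩
  obtain ⟨C', hC'⟩ := banach_steinhaus (g := fun i : K => (i : StrongDual ℝ E)) h
  exact ⟨max C' 0, le_max_right _ _, fun k hk => le_trans (hC' ⟨k, hk⟩) (le_max_left _ _)⟩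

lemma sep_nmem {E : Type*} [NormedAddCommGroup E] [NormedSpace ℝ E] {K : Set (StrongDual ℝ E)}
    (hK : K.Nonempty) (hKconv : Convex ℝ K) (hKcpt : IsCompact (StrongDual.toWeakDual '' K))
    {p1 : StrongDual ℝ E} (hp1 : p1 ∉ K) :
    ∃ x : E, sSup ((fun k : StrongDual ℝ E => k x) '' K) < p1 x := by
  haveI : LocallyConvexSpace ℝ (WeakDual ℝ E) := WeakBilin.locallyConvexSpace
  have hKcl : IsClosed (StrongDual.toWeakDual '' K) := hKcpt.isClosed
  have hKconv' : Convex ℝ (StrongDual.toWeakDual '' K) := by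
    have := hKconv.linear_image (StrongDual.toWeakDual (𝕜 := ℝ) (E := E)).toLinearMap
    simpa using this
  have hnot : StrongDual.toWeakDual p1 ∉ StrongDual.toWeakDual '' K := by
    rintro ⟨k, hk, he⟩
    exact hp1 (StrongDual.toWeakDual.injective he ▸ hk)
  obtain ⟨f, u, hfa, hfx⟩ := geometric_hahn_banach_closed_point hKconv' hKcl hnot
  obtain ⟨x, hx⟩ := weakDual_dual_eval f
  have h3 : sSup ((fun k : StrongDual ℝ E => k x) '' K) ≤ u := by
    refine csSup_le (hK.image _) ?_
    rintro _ ⟨k, hk, rfl⟩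
    have h1 : f (StrongDual.toWeakDual k) < u := hfa _ (mem_image_of_mem _ hk)
    rw [hx] at h1
    exact le_of_lt h1
  have h4 : u < p1 x := by
    have h2 := hfx
    rw [hx] at h2
    exact h2
  exact ⟨x, lt_of_le_of_lt h3 h4⟩

lemma ereal_mul_pos_ne_bot {b : ℝ} (hb : 0 < b) {x : EReal} (hx : x ≠ ⊥) :
    (b : EReal) * x ≠ ⊥ := by
  induction x using EReal.rec with
  | bot => exact absurd rfl hx
  | coe r => rw [← EReal.coe_mul]; exact EReal.coe_ne_bot _
  | top => rw [EReal.coe_mul_top_of_pos hb]; exact top_ne_bot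

section GfunAux

variable {E : Type*} [NormedAddCommGroup E] [NormedSpace ℝ E]
variable {y : E} {K : Set (StrongDual ℝ E)} {C : ℝ}

lemma gfun_apply_mem (y : E) (K : Set (StrongDual ℝ E)) {p : E × StrongDual ℝ E} (hu : p.2 ∈ K) :
    gfun y K p = ((sSup ((fun k : StrongDual ℝ E => k (p.1 - y)) '' K) + p.2 y : ℝ) : EReal) := by
  simp only [gfun, if_pos hu, add_zero, EReal.coe_add]

lemma gfun_apply_nmem (y : E) (K : Set (StrongDual ℝ E)) {p : E × StrongDual ℝ E} (hu : p.2 ∉ K) :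
    gfun y K p = ⊤ := by
  simp only [gfun, if_neg hu, EReal.coe_add_top, EReal.top_add_coe]

lemma gfun_ne_bot (y : E) (K : Set (StrongDual ℝ E)) (p : E × StrongDual ℝ E) : gfun y K p ≠ ⊥ := by
  by_cases hu : p.2 ∈ K
  · rw [gfun_apply_mem y K hu]; exact EReal.coe_ne_bot _
  · rw [gfun_apply_nmem y K hu]; exact top_ne_bot

lemma eval_le_bound (hC : ∀ k ∈ K, ‖k‖ ≤ C) {k : StrongDual ℝ E} (hk : k ∈ K) (x : E) :
    k x ≤ C * ‖x‖ := by
  have h1 : k x ≤ ‖k x‖ := le_abs_self _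
  exact le_trans h1 (le_trans (k.le_opNorm x)
    (mul_le_mul_of_nonneg_right (hC k hk) (norm_nonneg x)))

lemma bddAbove_eval (hC : ∀ k ∈ K, ‖k‖ ≤ C) (x : E) :
    BddAbove ((fun k : StrongDual ℝ E => k x) '' K) := by
  refine ⟨C * ‖x‖, ?_⟩
  rintro _ ⟨k, hk, rfl⟩
  exact eval_le_bound hC hk x

lemma bddAbove_eval2 (hC : ∀ k ∈ K, ‖k‖ ≤ C) (F : StrongDual ℝ (StrongDual ℝ E)) :
    BddAbove ((fun k : StrongDual ℝ E => F k) '' K) := by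
  refine ⟨‖F‖ * C, ?_⟩
  rintro _ ⟨k, hk, rfl⟩
  exact le_trans (le_abs_self _) (le_trans (F.le_opNorm k)
    (mul_le_mul_of_nonneg_left (hC k hk) (norm_nonneg F)))

lemma pairing_le_gfun (y : E) (K : Set (StrongDual ℝ E)) (hC : ∀ k ∈ K, ‖k‖ ≤ C)
    (p : E × StrongDual ℝ E) : ((p.2 p.1 : ℝ) : EReal) ≤ gfun y K p := by
  by_cases hu : p.2 ∈ K
  · rw [gfun_apply_mem y K hu, EReal.coe_le_coe_iff]
    have h1 : p.2 (p.1 - y) ≤ sSup ((fun k : StrongDual ℝ E => k (p.1 - y)) '' K) :=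
      le_csSup (bddAbove_eval hC _) (mem_image_of_mem _ hu)
    rw [map_sub] at h1
    linarith
  · rw [gfun_apply_nmem y K hu]; exact le_top

lemma conj2_gfun_eq {E : Type*} [NormedAddCommGroup E] [NormedSpace ℝ E] [CompleteSpace E]
    (y : E) (K : Set (StrongDual ℝ E)) (hK : K.Nonempty) (hKconv : Convex ℝ K)
    (hKcpt : IsCompact (StrongDual.toWeakDual '' K))
    (p : StrongDual ℝ E × StrongDual ℝ (StrongDual ℝ E)) :
    conj2 (gfun y K) p =
      (if p.1 ∈ K then (0 : EReal) else ⊤) + ((p.1 y : ℝ) : EReal)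
        + ((sSup ((fun k : StrongDual ℝ E =>
            (p.2 - inclusionInDoubleDual ℝ E y) k) '' K) : ℝ) : EReal) := by
  obtain ⟨C, hC0, hC⟩ := normBoundOfCompact hKcpt
  obtain ⟨p1, p2⟩ := p
  dsimp only
  set F := p2 - inclusionInDoubleDual ℝ E y with hF
  have hFu : ∀ u : StrongDual ℝ E, F u = p2 u - u y := by
    intro u
    rw [hF, ContinuousLinearMap.sub_apply, dual_def]
  set T := (fun k : StrongDual ℝ E => F k) '' K with hT
  have hTne : T.Nonempty := hK.image _
  have hTbdd : BddAbove T := bddAbove_eval2 hC F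
  by_cases hp1 : p1 ∈ K
  · rw [if_pos hp1, zero_add, ← EReal.coe_add]
    apply le_antisymm
    · refine iSup_le ?_
      rintro ⟨x, u⟩
      dsimp only
      by_cases hu : u ∈ K
      · rw [gfun_apply_mem y K (p := (x, u)) hu]
        dsimp only
        rw [← EReal.coe_sub, EReal.coe_le_coe_iff]
        have h1 : p1 (x - y) ≤ sSup ((fun k : StrongDual ℝ E => k (x - y)) '' K) :=
          le_csSup (bddAbove_eval hC _) (mem_image_of_mem _ hp1)
        have h2 : F u ≤ sSup T := le_csSup hTbdd (mem_image_of_mem _ hu)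
        rw [map_sub] at h1
        rw [hFu u] at h2
        linarith
      · rw [gfun_apply_nmem y K (p := (x, u)) hu, EReal.sub_top]
        exact bot_le
    · have key : ∀ k ∈ K, ((p1 y + F k : ℝ) : EReal) ≤ conj2 (gfun y K) (p1, p2) := by
        intro k hk
        have h1 := le_iSup (fun q : E × StrongDual ℝ E =>
          (((p1, p2).1 q.1 + (p1, p2).2 q.2 : ℝ) : EReal) - gfun y K q) (y, k)
        have h2 : gfun y K (y, k) = ((k y : ℝ) : EReal) := by
          rw [gfun_apply_mem y K (p := (y, k)) hk]
          dsimp only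
          have hf : (fun k : StrongDual ℝ E => k (y - y)) = fun _ => (0 : ℝ) := by
            funext j; simp
          rw [hf, hK.image_const, csSup_singleton, zero_add]
        rw [h2] at h1
        dsimp only at h1
        rw [← EReal.coe_sub] at h1
        have h3 : p1 y + F k = p1 y + p2 k - k y := by rw [hFu k]; ring
        rw [h3]
        exact h1
      by_cases hM : conj2 (gfun y K) (p1, p2) = ⊤
      · rw [hM]; exact le_top
      · obtain ⟨k0, hk0⟩ := id hK
        have hMbot : conj2 (gfun y K) (p1, p2) ≠ ⊥ :=
          (lt_of_lt_of_le (EReal.bot_lt_coe _) (key k0 hk0)).ne'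
        set m := (conj2 (gfun y K) (p1, p2)).toReal with hm
        have hMm : conj2 (gfun y K) (p1, p2) = (m : EReal) := (EReal.coe_toReal hM hMbot).symm
        rw [hMm, EReal.coe_le_coe_iff]
        have h4 : sSup T ≤ m - p1 y := by
          refine csSup_le hTne ?_
          rintro _ ⟨k, hk, rfl⟩
          have h5 := key k hk
          rw [hMm, EReal.coe_le_coe_iff] at h5
          linarith
        linarith
  · rw [if_neg hp1, EReal.top_add_coe, EReal.top_add_coe]
    obtain ⟨x0, hx0⟩ := sep_nmem hK hKconv hKcpt hp1
    obtain ⟨k0, hk0⟩ := id hK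
    set σ := sSup ((fun k : StrongDual ℝ E => k x0) '' K) with hσ
    have hδ : 0 < p1 x0 - σ := sub_pos.2 hx0
    have hub : ∀ r : ℝ, (r : EReal) ≤ conj2 (gfun y K) (p1, p2) := by
      intro r
      set c := p1 y + p2 k0 - k0 y with hc
      set t := max 0 ((r - c) / (p1 x0 - σ)) with ht
      have ht0 : 0 ≤ t := le_max_left _ _
      have htδ : r - c ≤ t * (p1 x0 - σ) := by
        have h1 : (r - c) / (p1 x0 - σ) ≤ t := le_max_right _ _
        calc r - c = ((r - c) / (p1 x0 - σ)) * (p1 x0 - σ) := by field_simp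
          _ ≤ t * (p1 x0 - σ) := mul_le_mul_of_nonneg_right h1 hδ.le
      have hq := le_iSup (fun q : E × StrongDual ℝ E =>
        (((p1, p2).1 q.1 + (p1, p2).2 q.2 : ℝ) : EReal) - gfun y K q) (y + t • x0, k0)
      have hSle : sSup ((fun k : StrongDual ℝ E => k (y + t • x0 - y)) '' K) ≤ t * σ := by
        refine csSup_le (hK.image _) ?_
        rintro _ ⟨k, hk, rfl⟩
        dsimp only
        have he : k (y + t • x0 - y) = t * k x0 := by
          rw [add_sub_cancel_left, map_smul, smul_eq_mul]
        rw [he]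
        exact mul_le_mul_of_nonneg_left (le_csSup (bddAbove_eval hC x0)
          (mem_image_of_mem _ hk)) ht0
      have hgle : gfun y K (y + t • x0, k0) ≤ ((t * σ + k0 y : ℝ) : EReal) := by
        rw [gfun_apply_mem y K (p := (y + t • x0, k0)) hk0]
        dsimp only
        exact_mod_cast add_le_add_left hSle _
      have hterm : ((p1 (y + t • x0) + p2 k0 : ℝ) : EReal) - ((t * σ + k0 y : ℝ) : EReal)
          ≤ conj2 (gfun y K) (p1, p2) := by
        refine le_trans (EReal.sub_le_sub le_rfl hgle) ?_
        dsimp only at hq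
        exact hq
      rw [← EReal.coe_sub] at hterm
      refine le_trans ?_ hterm
      rw [EReal.coe_le_coe_iff]
      have hp1x : p1 (y + t • x0) = p1 y + t * p1 x0 := by
        rw [map_add, map_smul, smul_eq_mul]
      rw [hp1x]
      nlinarith [htδ]
    by_contra hne
    have hbot : conj2 (gfun y K) (p1, p2) ≠ ⊥ :=
      (lt_of_lt_of_le (EReal.bot_lt_coe 0) (hub 0)).ne'
    set m := (conj2 (gfun y K) (p1, p2)).toReal with hm
    have hMm : conj2 (gfun y K) (p1, p2) = (m : EReal) := (EReal.coe_toReal hne hbot).symm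
    have := hub (m + 1)
    rw [hMm, EReal.coe_le_coe_iff] at this
    linarith

end GfunAux

/- ===== end auxiliary lemmas ===== -/

theorem stmt6 {E : Type*} [NormedAddCommGroup E] [NormedSpace ℝ E] [CompleteSpace E] [Nontrivial E]
    (y : E) (K : Set (StrongDual ℝ E)) (hK : K.Nonempty) (hKconv : Convex ℝ K)
    (hKcpt : IsCompact (StrongDual.toWeakDual '' K)) :
    (∀ p : StrongDual ℝ E × StrongDual ℝ (StrongDual ℝ E),
      conj2 (gfun y K) p =
        (if p.1 ∈ K then (0 : EReal) else ⊤) + ((p.1 y : ℝ) : EReal)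
          + ((sSup ((fun k : StrongDual ℝ E =>
              (p.2 - inclusionInDoubleDual ℝ E y) k) '' K) : ℝ) : EReal)) ∧
    IsStrongRep (gfun y K) := by
  obtain ⟨C, hC0, hC⟩ := normBoundOfCompact hKcpt
  have hconj := conj2_gfun_eq y K hK hKconv hKcpt
  refine ⟨hconj, ⟨⟨?_, ?_, ?_, pairing_le_gfun y K hC⟩, ?_⟩⟩
  · -- ProperFun
    obtain ⟨k0, hk0⟩ := hK
    refine ⟨⟨(y, k0), ?_⟩, gfun_ne_bot y K⟩
    rw [gfun_apply_mem y K (p := (y, k0)) hk0]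
    exact EReal.coe_ne_top _
  · -- EConvexOn
    rintro ⟨x1, u1⟩ ⟨x2, u2⟩ a b ha hb hab
    rcases ha.eq_or_lt with rfl | ha'
    · have hb1 : b = 1 := by linarith
      subst hb1
      simp only [EReal.coe_zero, EReal.coe_one, zero_smul, zero_add, one_smul, zero_mul,
        one_mul]
      exact le_refl _
    · rcases hb.eq_or_lt with rfl | hb'
      · have ha1 : a = 1 := by linarith
        subst ha1
        simp only [EReal.coe_zero, EReal.coe_one, zero_smul, add_zero, one_smul, zero_mul,
          one_mul]
        exact le_refl _
      · by_cases hu1 : u1 ∈ K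
        · by_cases hu2 : u2 ∈ K
          · have hmem : a • u1 + b • u2 ∈ K := hKconv hu1 hu2 ha hb hab
            have hpt : a • ((x1, u1) : E × StrongDual ℝ E) + b • (x2, u2)
                = (a • x1 + b • x2, a • u1 + b • u2) := rfl
            rw [hpt, gfun_apply_mem y K (p := (a • x1 + b • x2, a • u1 + b • u2)) hmem,
              gfun_apply_mem y K (p := (x1, u1)) hu1, gfun_apply_mem y K (p := (x2, u2)) hu2]
            dsimp only
            rw [← EReal.coe_mul, ← EReal.coe_mul, ← EReal.coe_add, EReal.coe_le_coe_iff]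
            set S1 := sSup ((fun k : StrongDual ℝ E => k (x1 - y)) '' K) with hS1
            set S2 := sSup ((fun k : StrongDual ℝ E => k (x2 - y)) '' K) with hS2
            have hSle : sSup ((fun k : StrongDual ℝ E => k (a • x1 + b • x2 - y)) '' K)
                ≤ a * S1 + b * S2 := by
              refine csSup_le (hK.image _) ?_
              rintro _ ⟨k, hk, rfl⟩
              dsimp only
              have hy : a • y + b • y = y := by rw [← add_smul, hab, one_smul]
              have hxy : a • x1 + b • x2 - y = a • (x1 - y) + b • (x2 - y) := by
                have h9 : a • (x1 - y) + b • (x2 - y) = a • x1 + b • x2 - (a • y + b • y) := by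
                  rw [smul_sub, smul_sub]; abel
                rw [hy] at h9
                exact h9.symm
              rw [hxy, map_add, map_smul, map_smul, smul_eq_mul, smul_eq_mul]
              have l1 : k (x1 - y) ≤ S1 := le_csSup (bddAbove_eval hC _)
                (mem_image_of_mem _ hk)
              have l2 : k (x2 - y) ≤ S2 := le_csSup (bddAbove_eval hC _)
                (mem_image_of_mem _ hk)
              exact add_le_add (mul_le_mul_of_nonneg_left l1 ha)
                (mul_le_mul_of_nonneg_left l2 hb)
            have happ : (a • u1 + b • u2) y = a * u1 y + b * u2 y := by
              simp [ContinuousLinearMap.add_apply, smul_eq_mul]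
            rw [happ]
            linarith
          · have h2 : gfun y K (x2, u2) = ⊤ := gfun_apply_nmem y K (p := (x2, u2)) hu2
            rw [h2, EReal.mul_top_of_pos (show (0 : EReal) < (b : EReal) from
              EReal.coe_pos.2 hb')]
            have h1 : (a : EReal) * gfun y K (x1, u1) ≠ ⊥ :=
              ereal_mul_pos_ne_bot ha' (gfun_ne_bot y K _)
            have h3 : (a : EReal) * gfun y K (x1, u1) + ⊤ = ⊤ := by
              rw [add_comm]; exact EReal.top_add_of_ne_bot h1
            rw [h3]; exact le_top
        · have h1 : gfun y K (x1, u1) = ⊤ := gfun_apply_nmem y K (p := (x1, u1)) hu1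
          rw [h1, EReal.mul_top_of_pos (show (0 : EReal) < (a : EReal) from
            EReal.coe_pos.2 ha')]
          have h2 : (b : EReal) * gfun y K (x2, u2) ≠ ⊥ :=
            ereal_mul_pos_ne_bot hb' (gfun_ne_bot y K _)
          rw [EReal.top_add_of_ne_bot h2]; exact le_top
  · -- LowerSemicontinuous
    have hKcl : IsClosed K := by
      have h1 : IsClosed (StrongDual.toWeakDual '' K) := hKcpt.isClosed
      have h2 := h1.preimage Dual.toWeakDual_continuous
      have h3 : StrongDual.toWeakDual ⁻¹' (StrongDual.toWeakDual '' K) = K :=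
        Set.preimage_image_eq K StrongDual.toWeakDual.injective
      rwa [h3] at h2
    set Sf : E → ℝ := fun x => sSup ((fun k : StrongDual ℝ E => k (x - y)) '' K) with hSf
    have hkey : ∀ x x' : E, Sf x ≤ Sf x' + C * ‖x - x'‖ := by
      intro x x'
      refine csSup_le (hK.image _) ?_
      rintro _ ⟨k, hk, rfl⟩
      dsimp only
      have he : x - y = (x' - y) + (x - x') := by abel
      rw [he, map_add]
      have l1 : k (x' - y) ≤ Sf x' := le_csSup (bddAbove_eval hC _) (mem_image_of_mem _ hk)
      have l2 : k (x - x') ≤ C * ‖x - x'‖ := eval_le_bound hC hk _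
      linarith
    have hSlip : LipschitzWith (Real.toNNReal C) Sf := by
      refine LipschitzWith.of_dist_le_mul fun x x' => ?_
      rw [Real.dist_eq, dist_eq_norm, Real.coe_toNNReal C hC0, abs_sub_le_iff]
      constructor
      · have := hkey x x'; linarith
      · have h4 := hkey x' x
        rw [norm_sub_rev x' x] at h4
        linarith
    have hScont : Continuous Sf := hSlip.continuous
    have hccont : Continuous fun p : E × StrongDual ℝ E => Sf p.1 + p.2 y := by
      refine (hScont.comp continuous_fst).add ?_
      exact (ContinuousLinearMap.apply ℝ ℝ y).continuous.comp continuous_snd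
    have hlower : ∀ p : E × StrongDual ℝ E, ((Sf p.1 + p.2 y : ℝ) : EReal) ≤ gfun y K p := by
      intro p
      by_cases hu : p.2 ∈ K
      · rw [gfun_apply_mem y K hu]
      · rw [gfun_apply_nmem y K hu]; exact le_top
    intro p
    by_cases hu : p.2 ∈ K
    · intro bb hbb
      rw [gfun_apply_mem y K hu] at hbb
      have hco : Continuous fun p' : E × StrongDual ℝ E => ((Sf p'.1 + p'.2 y : ℝ) : EReal) :=
        continuous_coe_real_ereal.comp hccont
      have hopen : IsOpen ((fun p' : E × StrongDual ℝ E => ((Sf p'.1 + p'.2 y : ℝ) : EReal)) ⁻¹'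
          Ioi bb) := isOpen_Ioi.preimage hco
      have hmem : p ∈ (fun p' : E × StrongDual ℝ E => ((Sf p'.1 + p'.2 y : ℝ) : EReal)) ⁻¹'
          Ioi bb := hbb
      filter_upwards [hopen.mem_nhds hmem] with p' hp'
      exact lt_of_lt_of_le hp' (hlower p')
    · intro bb hbb
      rw [gfun_apply_nmem y K hu] at hbb
      have hopen : IsOpen ((fun p' : E × StrongDual ℝ E => p'.2) ⁻¹' Kᶜ) :=
        hKcl.isOpen_compl.preimage continuous_snd
      have hmem : p ∈ (fun p' : E × StrongDual ℝ E => p'.2) ⁻¹' Kᶜ := hu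
      filter_upwards [hopen.mem_nhds hmem] with p' hp'
      rw [gfun_apply_nmem y K hp']
      exact hbb
  · -- strongly representative inequality
    intro p
    rw [hconj p]
    by_cases hp1 : p.1 ∈ K
    · rw [if_pos hp1, zero_add, ← EReal.coe_add, EReal.coe_le_coe_iff]
      have h1 : (p.2 - inclusionInDoubleDual ℝ E y) p.1
          ≤ sSup ((fun k : StrongDual ℝ E => (p.2 - inclusionInDoubleDual ℝ E y) k) '' K) :=
        le_csSup (bddAbove_eval2 hC _) (mem_image_of_mem _ hp1)
      rw [ContinuousLinearMap.sub_apply, dual_def] at h1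
      linarith
    · rw [if_neg hp1, EReal.top_add_coe, EReal.top_add_coe]
      exact le_top
end
end

section
/- Let E be a nonzero Banach space and f a representative function on E × E* (proper, convex, lsc, with f(x,x*) ≥ ⟨x,x*⟩ everywhere). Then the multifunction Mf with graph {(x,x*) : f(x,x*) = ⟨x,x*⟩} is monotone: whenever f(x,x*) = ⟨x,x*⟩ and f(y,y*) = ⟨y,y*⟩, we have ⟨x − y, x* − y*⟩ ≥ 0. -/
open NormedSpace Set
open scoped Classical

noncomputable section

theorem stmt9 {E : Type*} [NormedAddCommGroup E] [NormedSpace ℝ E] [CompleteSpace E] [Nontrivial E]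
    (f : E × StrongDual ℝ E → EReal) (hf : IsRep f)
    (x y : E) (xs ys : StrongDual ℝ E)
    (hx : xs ∈ Mgraph f x) (hy : ys ∈ Mgraph f y) :
    0 ≤ (xs - ys) (x - y) := by
  obtain ⟨hp, hc, hl, hge⟩ := hf
  have hx' : f (x, xs) = ((xs x : ℝ) : EReal) := hx
  have hy' : f (y, ys) = ((ys y : ℝ) : EReal) := hy
  have hconv := hc (x, xs) (y, ys) (1/2) (1/2) (by norm_num) (by norm_num) (by norm_num)
  set m : E × StrongDual ℝ E := (1/2 : ℝ) • (x, xs) + (1/2 : ℝ) • (y, ys) with hm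
  have hpair := hge m
  have hm2 : (m.2 m.1 : ℝ)
      = (1/2 * xs x + 1/2 * xs y + 1/2 * ys x + 1/2 * ys y) * (1/2) := by
    simp [hm, Prod.smul_def, map_add, map_smul]
    ring
  have key : ((m.2 m.1 : ℝ) : EReal)
      ≤ ((1/2 * (xs x) + 1/2 * (ys y) : ℝ) : EReal) := by
    calc ((m.2 m.1 : ℝ) : EReal) ≤ f m := hpair
      _ ≤ ((1/2 : ℝ) : EReal) * f (x, xs) + ((1/2 : ℝ) : EReal) * f (y, ys) := hconv
      _ = ((1/2 * (xs x) + 1/2 * (ys y) : ℝ) : EReal) := by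
          rw [hx', hy', ← EReal.coe_mul, ← EReal.coe_mul, ← EReal.coe_add]
  rw [EReal.coe_le_coe_iff, hm2] at key
  simp only [ContinuousLinearMap.sub_apply, map_sub]
  nlinarith [key]
end
end

section
/- Let E be a nonzero Banach space, f a strongly representative function on E × E*, and (x,x*) ∈ E × E* with f(x,x*) = ⟨x,x*⟩. Then f*(x*, x̂) = ⟨x,x*⟩, where x̂ is the canonical image of x in E**. -/
open NormedSpace Set
open scoped Classical

noncomputable section

private lemma aux_limit (a b r : ℝ) (h : ∀ l : ℝ, 0 < l → l ≤ 1 → l * a + (1 - l) * b ≤ r) :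
    b ≤ r := by
  by_contra hb
  push_neg at hb
  set ε := b - r with hε'
  have hε : 0 < ε := by simp [hε']; linarith
  set l := min 1 (ε / (2 * (|a - b| + 1))) with hl'
  have hpos : (0:ℝ) < |a - b| + 1 := by positivity
  have hl0 : 0 < l := lt_min one_pos (div_pos hε (by positivity))
  have hl1 : l ≤ 1 := min_le_left _ _
  have hmain := h l hl0 hl1
  have hle : l ≤ ε / (2 * (|a - b| + 1)) := min_le_right _ _
  have key : l * (|a - b| + 1) ≤ ε / 2 := by
    have := mul_le_mul_of_nonneg_right hle hpos.le
    have heq : ε / (2 * (|a - b| + 1)) * (|a - b| + 1) = ε / 2 := by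
      field_simp
    linarith [heq ▸ this]
  have habs : -(l * |a - b|) ≤ l * (a - b) := by
    nlinarith [neg_abs_le (a - b), hl0.le]
  nlinarith [key, habs, hl0, abs_nonneg (a - b)]

theorem stmt10 {E : Type*} [NormedAddCommGroup E] [NormedSpace ℝ E] [CompleteSpace E] [Nontrivial E]
    (f : E × StrongDual ℝ E → EReal) (hf : IsStrongRep f)
    (x : E) (xs : StrongDual ℝ E) (hx : f (x, xs) = ((xs x : ℝ) : EReal)) :
    conj2 f (xs, inclusionInDoubleDual ℝ E x) = ((xs x : ℝ) : EReal) := by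
  obtain ⟨⟨⟨_, hbot⟩, hconv, _, hrep⟩, _⟩ := hf
  apply le_antisymm
  · apply iSup_le
    rintro ⟨y, ys⟩
    simp only
    rcases eq_or_ne (f (y, ys)) ⊤ with hF | hF
    · rw [hF, EReal.sub_top]
      exact bot_le
    · obtain ⟨r, hr⟩ : ∃ r : ℝ, f (y, ys) = (r : EReal) :=
        ⟨(f (y, ys)).toReal, (EReal.coe_toReal hF (hbot _)).symm⟩
      rw [hr, ← EReal.coe_sub, EReal.coe_le_coe_iff]
      rw [dual_def]
      set a := ys y
      set c := xs y + ys x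
      set d := xs x
      have hkey : ∀ l : ℝ, 0 < l → l ≤ 1 → l * a + (1 - l) * (c - d) ≤ r := by
        intro l hl0 hl1
        have hc := hconv (y, ys) (x, xs) l (1 - l) hl0.le (by linarith) (by ring)
        rw [hx, hr] at hc
        have hp := hrep (l • (y, ys) + (1 - l) • (x, xs))
        have hP : ((l • (y, ys) + (1 - l) • (x, xs) : E × StrongDual ℝ E).2
            ((l • (y, ys) + (1 - l) • (x, xs) : E × StrongDual ℝ E).1) : ℝ)
            = l * l * a + l * (1 - l) * c + (1 - l) * (1 - l) * d := by
          simp only [Prod.smul_fst, Prod.smul_snd, Prod.fst_add, Prod.snd_add,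
            ContinuousLinearMap.add_apply, ContinuousLinearMap.coe_smul',
            Pi.smul_apply, map_add, map_smul, smul_eq_mul]
          ring
        rw [hP] at hp
        have hcomb : ((l * l * a + l * (1 - l) * c + (1 - l) * (1 - l) * d : ℝ) : EReal)
            ≤ ((l * r + (1 - l) * d : ℝ) : EReal) := by
          refine hp.trans (hc.trans_eq ?_)
          push_cast
          rfl
        rw [EReal.coe_le_coe_iff] at hcomb
        have h2 : l * (l * a + (1 - l) * (c - d)) ≤ l * r := by nlinarith [hcomb]
        exact le_of_mul_le_mul_left h2 hl0
      have := aux_limit a (c - d) r hkey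
      linarith
  · have := le_iSup (fun q : E × StrongDual ℝ E =>
      ((xs q.1 + (inclusionInDoubleDual ℝ E x) q.2 : ℝ) : EReal) - f q) (x, xs)
    refine le_trans ?_ this
    simp only [dual_def, hx]
    rw [← EReal.coe_sub, EReal.coe_le_coe_iff]
    linarith
end
end

section
/- Let E be a nonzero Banach space and S : E ⇉ E* a monotone multifunction. Suppose that for every y ∈ E and every nonempty weak*-compact convex subset K of E*, the multifunction S + M_{y,K} is maximally monotone, where M_{y,K} is the multifunction with x* ∈ M_{y,K}(x) iff g_{y,K}(x,x*) = ⟨x,x*⟩ with g_{y,K}(x,x*) := sup⟨x−y,K⟩ + I_K(x*) + ⟨y,x*⟩. Then S is w(E*,E)-cc maximally monotone: for every y ∈ E and nonempty weak*-compact convex C ⊆ E*, if for every (s,s*) in the graph of S there exists y* ∈ C with ⟨s − y, s* − y*⟩ ≥ 0, then Sy ∩ C ≠ ∅. -/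
open NormedSpace Set
open scoped Classical

noncomputable section

lemma mg_mem {E : Type*} [NormedAddCommGroup E] [NormedSpace ℝ E]
    (y : E) (K : Set (StrongDual ℝ E)) (hK : IsCompact (StrongDual.toWeakDual '' K))
    (s : E) (ts : StrongDual ℝ E) (h : ts ∈ Mgraph (gfun y K) s) :
    ts ∈ K ∧ ∀ k ∈ K, k (s - y) ≤ ts (s - y) := by
  have hbdd : BddAbove ((fun k : StrongDual ℝ E => k (s - y)) '' K) := by
    have : (fun k : StrongDual ℝ E => k (s - y)) '' K
        = (fun φ : WeakDual ℝ E => φ (s - y)) '' (StrongDual.toWeakDual '' K) := by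
      rw [Set.image_image]; rfl
    rw [this]
    exact (hK.image (WeakDual.eval_continuous (s - y))).bddAbove
  simp only [Mgraph, gfun, Set.mem_setOf_eq] at h
  by_cases hmem : ts ∈ K
  · simp only [hmem, if_true, add_zero] at h
    have h' : sSup ((fun k : StrongDual ℝ E => k (s - y)) '' K) + ts y = ts s := by
      exact_mod_cast h
    refine ⟨hmem, fun k hk => ?_⟩
    have hle : k (s - y) ≤ sSup ((fun k : StrongDual ℝ E => k (s - y)) '' K) :=
      le_csSup hbdd ⟨k, hk, rfl⟩
    have : ts (s - y) = ts s - ts y := by simp [map_sub]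
    linarith [hle, h', this]
  · exfalso
    simp only [hmem, if_false] at h
    rw [EReal.add_top_of_ne_bot (by exact EReal.coe_ne_bot _)] at h
    rw [EReal.top_add_of_ne_bot (by exact EReal.coe_ne_bot _)] at h
    exact (EReal.coe_ne_top _) h.symm

theorem stmt12 {E : Type*} [NormedAddCommGroup E] [NormedSpace ℝ E] [CompleteSpace E] [Nontrivial E]
    (S : E → Set (StrongDual ℝ E)) (hS : MonoMF S)
    (hmax : ∀ (y : E) (K : Set (StrongDual ℝ E)), K.Nonempty → Convex ℝ K →
      IsCompact (StrongDual.toWeakDual '' K) →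
      MaxMonoMF (fun x => {z : StrongDual ℝ E |
        ∃ ss ∈ S x, ∃ ts ∈ Mgraph (gfun y K) x, z = ss + ts})) :
    ∀ (y : E) (C : Set (StrongDual ℝ E)), C.Nonempty → Convex ℝ C →
      IsCompact (StrongDual.toWeakDual '' C) →
      (∀ (s : E) (ss : StrongDual ℝ E), ss ∈ S s → ∃ ys ∈ C, 0 ≤ (ss - ys) (s - y)) →
      (S y ∩ C).Nonempty := by
  intro y C hCne hCconv hCcomp hrel
  set K : Set (StrongDual ℝ E) := -C with hKdef
  have hKne : K.Nonempty := by
    obtain ⟨c, hc⟩ := hCne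
    exact ⟨-c, by simp [hKdef, Set.mem_neg, hc]⟩
  have hKconv : Convex ℝ K := hCconv.neg
  have himg : StrongDual.toWeakDual '' K = -(StrongDual.toWeakDual '' C) := by
    ext φ
    simp only [hKdef, Set.mem_image, Set.mem_neg]
    constructor
    · rintro ⟨k, hk, rfl⟩
      exact ⟨-k, hk, by simp⟩
    · rintro ⟨k, hk, hkφ⟩
      exact ⟨-k, by simpa using hk, by rw [map_neg, hkφ]; simp⟩
  have hKcomp : IsCompact (StrongDual.toWeakDual '' K) := by
    rw [himg]; exact hCcomp.neg
  obtain ⟨hmono, hmaximal⟩ := hmax y K hKne hKconv hKcomp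
  have hzero : (0 : StrongDual ℝ E) ∈ {z : StrongDual ℝ E |
      ∃ ss ∈ S y, ∃ ts ∈ Mgraph (gfun y K) y, z = ss + ts} := by
    apply hmaximal y 0
    rintro s z ⟨ss, hss, ts, hts, rfl⟩
    obtain ⟨ys, hysC, hys⟩ := hrel s ss hss
    obtain ⟨htsK, htsmax⟩ := mg_mem y K hKcomp s ts hts
    have hkey : (-ys) (s - y) ≤ ts (s - y) :=
      htsmax (-ys) (by simp [hKdef, Set.mem_neg, hysC])
    simp only [ContinuousLinearMap.sub_apply, ContinuousLinearMap.add_apply,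
      ContinuousLinearMap.zero_apply, ContinuousLinearMap.neg_apply, map_sub] at *
    linarith
  obtain ⟨ss, hss, ts, hts, h0⟩ := hzero
  have htsK : ts ∈ K := (mg_mem y K hKcomp y ts hts).1
  have : ss = -ts := by
    have := h0.symm
    linear_combination (norm := module) this
  refine ⟨ss, hss, ?_⟩
  rw [this]
  simpa [hKdef, Set.mem_neg] using htsK
end
end

section
/- Let E be a nonzero Banach space and S : E ⇉ E* a monotone multifunction. Suppose that for every nonempty weakly compact convex subset K of E and y* ∈ E*, the parallel sum S ∥ N_{K,y*} is maximally monotone, where N_{K,y*} is the multifunction with x* ∈ N_{K,y*}(x) iff I_K(x) + ⟨x,y*⟩ + sup⟨K, x* − y*⟩ = ⟨x,x*⟩. Then S is w(E,E*)-cc maximally monotone: for every nonempty weakly compact convex C ⊆ E and y* ∈ E*, if for every (s,s*) in the graph of S there exists w ∈ C with ⟨s − w, s* − y*⟩ ≥ 0, then S⁻¹y* ∩ C ≠ ∅. -/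
open NormedSpace Set
open scoped Classical

noncomputable section

-- helper: boundedness of linear images of weakly compact sets
lemma myBdd {E : Type*} [NormedAddCommGroup E] [NormedSpace ℝ E]
    {K : Set E} (hK : IsCompact (toWeakSpace ℝ E '' K)) (φ : StrongDual ℝ E) :
    BddAbove ((fun k : E => φ k) '' K) := by
  have hcont : Continuous fun w : WeakSpace ℝ E => (topDualPairing ℝ E).flip w φ :=
    WeakBilin.eval_continuous _ φ
  have h2 := (hK.image hcont).bddAbove
  rw [Set.image_image] at h2
  exact h2

-- helper: unpacking of Mgraph (hfun K ys)
lemma myMemN {E : Type*} [NormedAddCommGroup E] [NormedSpace ℝ E]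
    {K : Set E} (hK : IsCompact (toWeakSpace ℝ E '' K)) {v : E} {xs ys : StrongDual ℝ E}
    (h : xs ∈ Mgraph (hfun K ys) v) :
    v ∈ K ∧ ∀ w ∈ K, (xs - ys) w ≤ (xs - ys) v := by
  simp only [Mgraph, hfun, Set.mem_setOf_eq] at h
  by_cases hv : v ∈ K
  · refine ⟨hv, ?_⟩
    rw [if_pos hv, zero_add, ← EReal.coe_add, EReal.coe_eq_coe_iff] at h
    intro w hw
    have hle : (xs - ys) w ≤ sSup ((fun k : E => (xs - ys) k) '' K) :=
      le_csSup (myBdd hK _) (Set.mem_image_of_mem _ hw)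
    have e1 : (xs - ys) w = xs w - ys w := rfl
    have e2 : (xs - ys) v = xs v - ys v := rfl
    linarith [hle, h]
  · rw [if_neg hv] at h
    simp only [EReal.top_add_coe] at h
    exact absurd h (by simp)

theorem stmt13 {E : Type*} [NormedAddCommGroup E] [NormedSpace ℝ E] [CompleteSpace E] [Nontrivial E]
    (S : E → Set (StrongDual ℝ E)) (hS : MonoMF S)
    (hmax : ∀ (K : Set E) (ys : StrongDual ℝ E), K.Nonempty → Convex ℝ K →
      IsCompact (toWeakSpace ℝ E '' K) →
      MaxMonoMF (parSum S (Mgraph (hfun K ys)))) :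
    ∀ (C : Set E) (ys : StrongDual ℝ E), C.Nonempty → Convex ℝ C →
      IsCompact (toWeakSpace ℝ E '' C) →
      (∀ (s : E) (ss : StrongDual ℝ E), ss ∈ S s → ∃ w ∈ C, 0 ≤ (ss - ys) (s - w)) →
      ({s : E | ys ∈ S s} ∩ C).Nonempty := by
  intro C ys hne hconv hcomp hrel
  -- apply hmax with K = -C
  have hKne : (-C).Nonempty := hne.neg
  have hKconv : Convex ℝ (-C) := hconv.neg
  have hKcomp : IsCompact (toWeakSpace ℝ E '' (-C)) := by
    have : toWeakSpace ℝ E '' (-C) = -(toWeakSpace ℝ E '' C) := by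
      ext w
      simp only [Set.mem_image, Set.mem_neg]
      constructor
      · rintro ⟨x, hx, rfl⟩
        exact ⟨-x, hx, by simp [map_neg]⟩
      · rintro ⟨x, hx, hxe⟩
        exact ⟨-x, by simpa using hx, by rw [map_neg, hxe, neg_neg]⟩
    rw [this]
    exact hcomp.neg
  obtain ⟨hmono, hmaxi⟩ := hmax (-C) ys hKne hKconv hKcomp
  have key : ys ∈ parSum S (Mgraph (hfun (-C) ys)) 0 := by
    apply hmaxi
    intro s ss hss
    obtain ⟨v, hsS, hsN⟩ := hss
    obtain ⟨hvK, hvmax⟩ := myMemN hKcomp hsN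
    obtain ⟨w, hw, hge⟩ := hrel (s - v) ss hsS
    have h1 : (ss - ys) (-w) ≤ (ss - ys) v := hvmax (-w) (by simpa using hw)
    have e1 : (ss - ys) (s - v - w) = ss s - ss v - ss w - (ys s - ys v - ys w) := by
      simp [map_sub]; ring
    have e2 : (ss - ys) ((s - v) - w) = (ss - ys) (s - v - w) := rfl
    have e3 : (ss - ys) (-w) = -(ss w) - -(ys w) := by simp
    have e4 : (ss - ys) v = ss v - ys v := rfl
    have e5 : (ys - ss) (0 - s) = ys (-s) - ss (-s) := by simp
    rw [e5, map_neg, map_neg]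
    rw [e2, e1] at hge
    rw [e3, e4] at h1
    linarith
  obtain ⟨v, hv1, hv2⟩ := key
  obtain ⟨hvK, -⟩ := myMemN hKcomp hv2
  exact ⟨-v, by simpa using hv1, by simpa using hvK⟩
end
end

section
/- Let E, F be nonzero Banach spaces, A ∈ L(E,F), f, g strongly representative functions on E × E* and F × F*. Suppose there exists a closed subspace H of F with D(Mg) − A[D(Mf)] ⊆ H ⊆ ⋃_{λ>0} λ[π_F dom g − A(π_E dom f)]. Then ⋃_{λ>0} λ[π_F dom g − A(π_E dom f)] = H (in particular it is a closed subspace of F). -/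
open NormedSpace Set
open scoped Classical

noncomputable section

/-- Sandwich: a continuous concave function below a proper EConvex function can be
separated by a continuous affine function. -/
theorem sandwich {X : Type*} [NormedAddCommGroup X] [NormedSpace ℝ X]
    (f : X → EReal) (hconv : EConvexOn f) (hbot : ∀ x, f x ≠ ⊥)
    (x₀ : X) (hx₀ : f x₀ ≠ ⊤)
    (φ : X → ℝ) (hc : Continuous φ)
    (hconc : ∀ x y : X, ∀ a b : ℝ, 0 ≤ a → 0 ≤ b → a + b = 1 →
       a * φ x + b * φ y ≤ φ (a • x + b • y))
    (hle : ∀ x, ((φ x : ℝ) : EReal) ≤ f x) :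
    ∃ (ξ : X →L[ℝ] ℝ) (r : ℝ), (∀ x, φ x ≤ ξ x + r) ∧
      ∀ x, ((ξ x + r : ℝ) : EReal) ≤ f x := by
  -- strict hypograph of φ
  set s : Set (X × ℝ) := {p | p.2 < φ p.1} with hs
  -- epigraph of f
  set t : Set (X × ℝ) := {p | f p.1 ≤ ((p.2 : ℝ) : EReal)} with ht
  have hsopen : IsOpen s := by
    have : Continuous fun p : X × ℝ => φ p.1 - p.2 := by fun_prop
    have : s = (fun p : X × ℝ => φ p.1 - p.2) ⁻¹' Ioi 0 := by
      ext p; simp [hs, sub_pos]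
    rw [this]
    exact (by fun_prop : Continuous fun p : X × ℝ => φ p.1 - p.2).isOpen_preimage _ isOpen_Ioi
  have hsconv : Convex ℝ s := by
    rintro ⟨x, c⟩ hx ⟨y, d⟩ hy a b ha hb hab
    simp only [hs, mem_setOf_eq] at hx hy ⊢
    have h1 := hconc x y a b ha hb hab
    have h2 : a * c + b * d < a * φ x + b * φ y := by
      rcases eq_or_lt_of_le ha with h | h
      · have hb1 : b = 1 := by linarith
        subst hb1; simp only [← h, zero_mul, zero_add, one_mul]; linarith [hy]
      rcases eq_or_lt_of_le hb with h' | h'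
      · have ha1 : a = 1 := by linarith
        subst ha1; simp only [← h', mul_zero, add_zero, one_mul]; nlinarith [hx]
      · nlinarith [hx, hy]
    calc (a • (x, c) + b • (y, d)).2 = a * c + b * d := rfl
      _ < φ (a • x + b • y) := by linarith
      _ = φ ((a • (x, c) + b • (y, d)).1) := rfl
  have htconv : Convex ℝ t := by
    rintro ⟨x, c⟩ hx ⟨y, d⟩ hy a b ha hb hab
    simp only [ht, mem_setOf_eq] at hx hy ⊢
    have h1 := hconv x y a b ha hb hab
    have hfx : f x ≠ ⊤ := by
      intro h; rw [h] at hx; exact absurd hx (EReal.coe_lt_top c).not_ge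
    have hfy : f y ≠ ⊤ := by
      intro h; rw [h] at hy; exact absurd hy (EReal.coe_lt_top d).not_ge
    lift f x to ℝ using ⟨hfx, hbot x⟩ with fx hfx'
    lift f y to ℝ using ⟨hfy, hbot y⟩ with fy hfy'
    have hx' : fx ≤ c := by exact_mod_cast hx
    have hy' : fy ≤ d := by exact_mod_cast hy
    calc f ((a • (x, c) + b • (y, d)).1) = f (a • x + b • y) := rfl
      _ ≤ (a : EReal) * (fx : EReal) + (b : EReal) * (fy : EReal) := h1
      _ = ((a * fx + b * fy : ℝ) : EReal) := by
          rw [← EReal.coe_mul, ← EReal.coe_mul, ← EReal.coe_add]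
      _ ≤ (((a • (x, c) + b • (y, d)).2 : ℝ) : EReal) := by
          show ((a * fx + b * fy : ℝ) : EReal) ≤ ((a * c + b * d : ℝ) : EReal)
          exact_mod_cast add_le_add (mul_le_mul_of_nonneg_left hx' ha)
            (mul_le_mul_of_nonneg_left hy' hb)
  have hdisj : Disjoint s t := by
    rw [disjoint_left]
    rintro ⟨x, c⟩ hxs hxt
    simp only [hs, ht, mem_setOf_eq] at hxs hxt
    exact absurd (le_trans (hle x) hxt) (by exact_mod_cast not_le.2 hxs)
  obtain ⟨F, u, hFs, hFt⟩ := geometric_hahn_banach_open hsconv hsopen htconv hdisj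
  set k : ℝ := F (0, 1) with hk
  have hFsplit : ∀ (x : X) (c : ℝ), F (x, c) = F (x, 0) + c * k := by
    intro x c
    have : (x, c) = (x, (0:ℝ)) + c • ((0:X), (1:ℝ)) := by
      simp [Prod.ext_iff]
    rw [this, map_add, map_smul]; ring_nf; rw [hk, mul_comm]
  -- on s : F (x, c) < u for all c < φ x
  have hks : ∀ (x : X) (c : ℝ), c < φ x → F (x, 0) + c * k < u := by
    intro x c hc; rw [← hFsplit]; exact hFs _ hc
  have hx₀t : ((x₀, (f x₀).toReal) : X × ℝ) ∈ t := by
    simp only [ht, mem_setOf_eq]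
    exact le_of_eq (EReal.coe_toReal hx₀ (hbot x₀)).symm
  have hkpos : 0 < k := by
    rcases lt_trichotomy k 0 with h | h | h
    · exfalso
      set c : ℝ := min (φ 0 - 1) ((u - F (0, 0) + 1)/k) with hc
      have hc1 : c < φ 0 := lt_of_le_of_lt (min_le_left _ _) (by linarith)
      have hc2 : c ≤ (u - F (0, 0) + 1)/k := min_le_right _ _
      have hck : u - F (0, 0) + 1 ≤ c * k := (le_div_iff_of_neg h).1 hc2
      have := hks 0 c hc1
      linarith
    · exfalso
      have h1 := hks x₀ (φ x₀ - 1) (by linarith)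
      have h2 := hFt _ hx₀t
      rw [hFsplit] at h2
      rw [h] at h1 h2
      simp only [mul_zero] at h1 h2
      linarith
    · exact h
  -- define ξ and r
  set G : X →L[ℝ] ℝ := F.comp (ContinuousLinearMap.inl ℝ X ℝ) with hG
  have hGa : ∀ x : X, G x = F (x, 0) := fun x => rfl
  refine ⟨(-k⁻¹) • G, u / k, ?_, ?_⟩
  · intro x
    -- φ x ≤ (u - G x)/k
    have key : F (x, 0) + φ x * k ≤ u := by
      by_contra hcon
      push_neg at hcon
      -- pick c slightly below φ x
      set ι : ℝ := (F (x, 0) + φ x * k - u) / (2 * k) with hι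
      have hιpos : 0 < ι := by
        apply div_pos; linarith; linarith
      have := hks x (φ x - ι) (by linarith)
      have : F (x, 0) + (φ x - ι) * k < u := this
      have hιk : ι * k ≤ (F (x, 0) + φ x * k - u) / 2 := by
        rw [hι, div_mul_eq_mul_div, mul_comm]
        rw [div_le_div_iff₀ (by linarith) (by norm_num)]
        ring_nf; nlinarith
      nlinarith
    have hGx : G x = F (x, 0) := rfl
    simp only [ContinuousLinearMap.smul_apply, smul_eq_mul, hGx]
    rw [div_eq_mul_inv]
    have hkinv : 0 < k⁻¹ := inv_pos.2 hkpos
    have := mul_le_mul_of_nonneg_right key (le_of_lt hkinv)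
    rw [add_mul] at this
    rw [mul_assoc, mul_inv_cancel₀ (ne_of_gt hkpos), mul_one] at this
    linarith [this]
  · intro x
    rcases eq_or_ne (f x) ⊤ with h | h
    · rw [h]; exact le_top
    · have hmem : ((x, (f x).toReal) : X × ℝ) ∈ t := by
        simp only [ht, mem_setOf_eq]
        exact le_of_eq (EReal.coe_toReal h (hbot x)).symm
      have h2 := hFt _ hmem
      rw [hFsplit] at h2
      have hGx : G x = F (x, 0) := rfl
      have hreal : (-k⁻¹) * G x + u / k ≤ (f x).toReal := by
        rw [hGx, div_eq_mul_inv]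
        have hkinv : 0 < k⁻¹ := inv_pos.2 hkpos
        have h3 := mul_le_mul_of_nonneg_right h2 (le_of_lt hkinv)
        rw [add_mul, mul_assoc, mul_inv_cancel₀ (ne_of_gt hkpos), mul_one] at h3
        linarith
      calc (((-k⁻¹) • G) x + u / k : ℝ) ≤ ((f x).toReal : EReal) := by
            exact_mod_cast hreal
        _ = f x := EReal.coe_toReal h (hbot x)

/-- Approximate attainment for the conjugate of `(t/2)‖·‖²`. -/
theorem norm_sq_conj_approx {Y : Type*} [NormedAddCommGroup Y] [NormedSpace ℝ Y]
    (c : Y →L[ℝ] ℝ) {t ε : ℝ} (ht : 0 < t) (hε : 0 < ε) :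
    ∃ s : Y, ‖c‖^2/(2*t) - ε ≤ c s - t/2*‖s‖^2 := by
  rcases le_or_gt (‖c‖^2) (t*ε) with h | h
  · refine ⟨0, ?_⟩
    simp only [map_zero, norm_zero]
    have : ‖c‖^2/(2*t) ≤ ε/2 := by
      rw [div_le_div_iff₀ (by linarith) (by norm_num)]
      nlinarith
    nlinarith
  · have hc : 0 < ‖c‖ := by
      rcases (norm_nonneg c).eq_or_lt with h' | h'
      · exfalso; rw [← h'] at h; nlinarith
      · exact h'
    obtain ⟨r, hr⟩ : ∃ r : ℝ, r = ‖c‖ - t*ε/‖c‖ := ⟨_, rfl⟩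
    have hpos' : 0 < t*ε/‖c‖ := by positivity
    have hrlt : r < ‖c‖ := by rw [hr]; linarith
    obtain ⟨x, hx1, hx2⟩ := c.exists_lt_apply_of_lt_opNorm hrlt
    have hrpos : 0 < r := by
      rw [hr, sub_pos, div_lt_iff₀ hc]
      nlinarith
    -- choose sign
    have : ∃ y : Y, ‖y‖ ≤ 1 ∧ r < c y := by
      rcases le_or_gt 0 (c x) with hcx | hcx
      · exact ⟨x, hx1.le, by rwa [Real.norm_eq_abs, abs_of_nonneg hcx] at hx2⟩
      · refine ⟨-x, by simpa using hx1.le, ?_⟩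
        rw [map_neg]
        rwa [Real.norm_eq_abs, abs_of_neg hcx] at hx2
    obtain ⟨y, hy1, hy2⟩ := this
    refine ⟨(‖c‖/t) • y, ?_⟩
    have h1 : c ((‖c‖/t) • y) = (‖c‖/t) * c y := by rw [map_smul]; rfl
    have h2 : ‖(‖c‖/t) • y‖^2 ≤ (‖c‖/t)^2 := by
      rw [norm_smul]
      have : ‖(‖c‖/t : ℝ)‖ = ‖c‖/t := by
        rw [Real.norm_eq_abs, abs_of_pos (by positivity)]
      rw [this]
      have h1y : ‖c‖/t * ‖y‖ ≤ ‖c‖/t := by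
        nlinarith [norm_nonneg y, (by positivity : (0:ℝ) < ‖c‖/t)]
      nlinarith [norm_nonneg y, (by positivity : (0:ℝ) ≤ ‖c‖/t * ‖y‖)]
    have h3 : (‖c‖/t) * c y > (‖c‖/t) * r := by
      apply mul_lt_mul_of_pos_left hy2 (by positivity)
    have h4 : (‖c‖/t) * r = ‖c‖^2/t - ε := by
      rw [hr]; field_simp
    have h5 : t/2 * ‖(‖c‖/t) • y‖^2 ≤ t/2 * (‖c‖/t)^2 := by
      nlinarith [h2]
    have h6 : t/2 * (‖c‖/t)^2 = ‖c‖^2/(2*t) := by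
      field_simp
    have h7 : ‖c‖^2/t = 2*(‖c‖^2/(2*t)) := by field_simp
    rw [h1]
    linarith [h3, h5]

section Step
variable {E : Type*} [NormedAddCommGroup E] [NormedSpace ℝ E]

lemma sq_combo {n s u α β : ℝ} (hα : 0 ≤ α) (hβ : 0 ≤ β) (hαβ : α + β = 1)
    (hn : 0 ≤ n) (hs : 0 ≤ s) (hu : 0 ≤ u) (h : n ≤ α * s + β * u) :
    n^2 ≤ α * s^2 + β * u^2 := by
  nlinarith [sq_nonneg (s - u), mul_nonneg hα hβ, sq_nonneg n, mul_nonneg hs hu]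

set_option maxHeartbeats 1000000 in
/-- concavity of the test functions φσ -/
lemma phi_conc (a : E) (b : StrongDual ℝ E) (t σ : ℝ) (ht : 0 < t) :
    ∀ x y : E × StrongDual ℝ E, ∀ α β : ℝ, 0 ≤ α → 0 ≤ β → α + β = 1 →
      α * (x.2 a + b x.1 - b a + σ - t/2*‖x.1 - a‖^2 - t⁻¹/2*‖x.2 - b‖^2)
      + β * (y.2 a + b y.1 - b a + σ - t/2*‖y.1 - a‖^2 - t⁻¹/2*‖y.2 - b‖^2)
      ≤ ((α • x + β • y).2 a + b (α • x + β • y).1 - b a + σ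
          - t/2*‖(α • x + β • y).1 - a‖^2 - t⁻¹/2*‖(α • x + β • y).2 - b‖^2) := by
  intro x y α β hα hβ hαβ
  have h1 : (α • x + β • y).1 = α • x.1 + β • y.1 := rfl
  have h2 : (α • x + β • y).2 = α • x.2 + β • y.2 := rfl
  have h2a : (α • x + β • y).2 a = α * x.2 a + β * y.2 a := by
    rw [h2]; simp [ContinuousLinearMap.smul_apply]
  have h1b : b ((α • x + β • y).1) = α * b x.1 + β * b y.1 := by
    rw [h1]; simp
  have hv1 : (α • x + β • y).1 - a = α • (x.1 - a) + β • (y.1 - a) := by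
    have key : α • (x.1 - a) + β • (y.1 - a) = α • x.1 + β • y.1 - (α + β) • a := by
      module
    rw [h1, key, hαβ, one_smul]
  have hv2 : (α • x + β • y).2 - b = α • (x.2 - b) + β • (y.2 - b) := by
    have key : α • (x.2 - b) + β • (y.2 - b) = α • x.2 + β • y.2 - (α + β) • b := by
      module
    rw [h2, key, hαβ, one_smul]
  have hn1 : ‖(α • x + β • y).1 - a‖ ≤ α * ‖x.1 - a‖ + β * ‖y.1 - a‖ := by
    rw [hv1]
    calc ‖α • (x.1 - a) + β • (y.1 - a)‖ ≤ ‖α • (x.1 - a)‖ + ‖β • (y.1 - a)‖ :=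
          norm_add_le _ _
      _ = α * ‖x.1 - a‖ + β * ‖y.1 - a‖ := by
          rw [norm_smul, norm_smul, Real.norm_eq_abs, Real.norm_eq_abs,
            abs_of_nonneg hα, abs_of_nonneg hβ]
  have hn2 : ‖(α • x + β • y).2 - b‖ ≤ α * ‖x.2 - b‖ + β * ‖y.2 - b‖ := by
    rw [hv2]
    calc ‖α • (x.2 - b) + β • (y.2 - b)‖ ≤ ‖α • (x.2 - b)‖ + ‖β • (y.2 - b)‖ :=
          norm_add_le _ _
      _ = α * ‖x.2 - b‖ + β * ‖y.2 - b‖ := by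
          rw [norm_smul, norm_smul, Real.norm_eq_abs, Real.norm_eq_abs,
            abs_of_nonneg hα, abs_of_nonneg hβ]
  have hq1 : ‖(α • x + β • y).1 - a‖^2 ≤ α * ‖x.1 - a‖^2 + β * ‖y.1 - a‖^2 :=
    sq_combo hα hβ hαβ (norm_nonneg _) (norm_nonneg _) (norm_nonneg _) hn1
  have hq2 : ‖(α • x + β • y).2 - b‖^2 ≤ α * ‖x.2 - b‖^2 + β * ‖y.2 - b‖^2 :=
    sq_combo hα hβ hαβ (norm_nonneg _) (norm_nonneg _) (norm_nonneg _) hn2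
  have htinv : 0 < t⁻¹ := inv_pos.2 ht
  rw [h2a, h1b]
  obtain rfl : β = 1 - α := by linarith
  have e1 := mul_le_mul_of_nonneg_left hq1 (le_of_lt (half_pos ht))
  have e2 := mul_le_mul_of_nonneg_left hq2 (le_of_lt (half_pos htinv))
  generalize ‖(α • x + (1-α) • y).1 - a‖^2 = M1 at e1 ⊢
  generalize ‖(α • x + (1-α) • y).2 - b‖^2 = M2 at e2 ⊢
  linarith [e1, e2]

lemma phi_cont (a : E) (b : StrongDual ℝ E) (t σ : ℝ) :
    Continuous (fun p : E × StrongDual ℝ E =>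
      p.2 a + b p.1 - b a + σ - t/2*‖p.1 - a‖^2 - t⁻¹/2*‖p.2 - b‖^2) := by
  have h1 : Continuous fun p : E × StrongDual ℝ E => p.2 a :=
    (ContinuousLinearMap.apply ℝ ℝ a).continuous.comp continuous_snd
  have h2 : Continuous fun p : E × StrongDual ℝ E => b p.1 := b.continuous.comp continuous_fst
  have h3 : Continuous fun p : E × StrongDual ℝ E => ‖p.1 - a‖^2 :=
    ((continuous_fst.sub continuous_const).norm.pow 2)
  have h4 : Continuous fun p : E × StrongDual ℝ E => ‖p.2 - b‖^2 :=
    ((continuous_snd.sub continuous_const).norm.pow 2)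
  exact ((((h1.add h2).sub continuous_const).add continuous_const).sub
    (continuous_const.mul h3)).sub (continuous_const.mul h4)

end Step

section RealHelpers
lemma div2t (t x : ℝ) : x/(2*t) = t⁻¹/2*x := by
  rw [div_eq_mul_inv, mul_inv]; ring

lemma quad_id (τ U N : ℝ) (hτ : 0 < τ) :
    τ/2*(U - N/τ)^2 = τ/2*U^2 - N*U + N^2/(2*τ) := by
  field_simp; ring

lemma quad_id2 (τ X : ℝ) (hτ : 0 < τ) : X^2 = 2/τ*(τ/2*X^2) := by
  field_simp

lemma amgm_id (τ U N : ℝ) (hτ : 0 < τ) :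
    N^2/(2*τ) - (N*U - τ/2*U^2) = (τ*U - N)^2/(2*τ) := by
  field_simp; ring

lemma inv_flip (t δ : ℝ) (ht : 0 < t) : 2*δ/t⁻¹ = 2*t*δ := by
  field_simp

lemma div_le_sqrt_aux (t x η : ℝ) (ht : 0 < t) (hη : 0 ≤ η) (hx : 0 ≤ x)
    (h : x^2 ≤ 2*t*η) : x/t ≤ Real.sqrt (2*η/t) := by
  rw [Real.le_sqrt (by positivity) (by positivity), div_pow]
  have h2a : (0:ℝ) < t^2 := by positivity
  rw [div_le_div_iff₀ h2a ht]
  nlinarith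
end RealHelpers

section Main
variable {E : Type*} [NormedAddCommGroup E] [NormedSpace ℝ E]

lemma sandwich_out (f : E × StrongDual ℝ E → EReal) (hf : IsStrongRep f) (a : E) (b : StrongDual ℝ E)
    {t : ℝ} (ht : 0 < t) (σ : ℝ)
    (hle : ∀ p : E × StrongDual ℝ E,
      ((p.2 a + b p.1 - b a + σ - t/2*‖p.1 - a‖^2 - t⁻¹/2*‖p.2 - b‖^2 : ℝ) : EReal) ≤ f p) :
    ∃ (us : StrongDual ℝ E) (uss : StrongDual ℝ (StrongDual ℝ E)) (C : ℝ),
      ‖us‖^2/(2*t) + ‖uss‖^2/(2*t⁻¹) ≤ C - σ ∧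
      uss us ≤ -C ∧
      (∀ z : E, ∀ w : StrongDual ℝ E,
        ((us (z - a) + uss (w - b) + C - b a + b z + w a : ℝ) : EReal) ≤ f (z, w)) := by
  obtain ⟨x₀, hx₀⟩ := hf.1.1.1
  have hbot := hf.1.1.2
  obtain ⟨ξ, r, hup, hdown⟩ := sandwich f hf.1.2.1 hbot x₀ hx₀ _
    (phi_cont a b t σ) (phi_conc a b t σ ht) hle
  set c₁ : StrongDual ℝ E := ξ.comp (ContinuousLinearMap.inl ℝ E (StrongDual ℝ E)) with hc₁
  set c₂ : StrongDual ℝ (StrongDual ℝ E) := ξ.comp (ContinuousLinearMap.inr ℝ E (StrongDual ℝ E)) with hc₂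
  have hsplit : ∀ (z : E) (w : StrongDual ℝ E), ξ (z, w) = c₁ z + c₂ w := by
    intro z w
    have h : ((z, w) : E × StrongDual ℝ E) = (z, 0) + (0, w) := by simp
    rw [h, map_add, hc₁, hc₂]
    simp [ContinuousLinearMap.comp_apply]
  set Ja : StrongDual ℝ (StrongDual ℝ E) := inclusionInDoubleDual ℝ E a with hJa
  have hJa_apply : ∀ w : StrongDual ℝ E, Ja w = w a := fun w => rfl
  set us : StrongDual ℝ E := c₁ - b with hus
  set uss : StrongDual ℝ (StrongDual ℝ E) := c₂ - Ja with huss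
  set C : ℝ := r + c₁ a + c₂ b - b a with hC
  -- the affine minorant rewritten
  have hID : ∀ (z : E) (w : StrongDual ℝ E),
      us (z - a) + uss (w - b) + C - b a + b z + w a = ξ (z, w) + r := by
    intro z w
    rw [hsplit]
    simp only [hus, huss, ContinuousLinearMap.sub_apply, map_sub, hJa_apply]
    ring
  refine ⟨us, uss, C, ?_, ?_, ?_⟩
  · -- key2
    have key1 : ∀ (s : E) (u : StrongDual ℝ E),
        (-us) s - t/2*‖s‖^2 + ((-uss) u - t⁻¹/2*‖u‖^2) ≤ C - σ := by
      intro s u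
      have h := hup (a + s, b + u)
      rw [← hID (a + s) (b + u)] at h
      simp only [ContinuousLinearMap.add_apply, ContinuousLinearMap.neg_apply,
        add_sub_cancel_left, map_add] at h ⊢
      linarith
    by_contra hcon
    push_neg at hcon
    set ε : ℝ := (‖us‖^2/(2*t) + ‖uss‖^2/(2*t⁻¹) - (C - σ))/2 with hε
    have hεpos : 0 < ε := by rw [hε]; linarith
    have htinv : 0 < t⁻¹ := inv_pos.2 ht
    obtain ⟨s, hs⟩ := norm_sq_conj_approx (-us) ht (half_pos hεpos)
    obtain ⟨u, hu⟩ := norm_sq_conj_approx (-uss) htinv (half_pos hεpos)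
    rw [norm_neg] at hs hu
    have := key1 s u
    linarith
  · -- strong representativity
    have hconj : conj2 f (c₁, c₂) ≤ ((-r : ℝ) : EReal) := by
      refine iSup_le fun q => ?_
      rcases eq_or_ne (f q) ⊤ with h | h
      · rw [h]
        rw [EReal.sub_top]
        exact bot_le
      · lift f q to ℝ using ⟨h, hbot q⟩ with ρ hρ
        have hd : ξ q + r ≤ ρ := by
          have h' := hdown q
          rw [← hρ] at h'
          exact_mod_cast h'
        rw [show q = (q.1, q.2) from rfl, hsplit] at hd
        rw [← EReal.coe_sub, EReal.coe_le_coe_iff]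
        linarith
    have hstr := le_trans (hf.2 (c₁, c₂)) hconj
    rw [EReal.coe_le_coe_iff] at hstr
    have : uss us = c₂ c₁ - c₂ b - c₁ a + b a := by
      simp only [huss, hus, ContinuousLinearMap.sub_apply, map_sub, hJa_apply]
      ring
    rw [this, hC]
    linarith
  · intro z w
    rw [hID]
    exact hdown (z, w)

lemma exists_near (f : E × StrongDual ℝ E → EReal) (hf : IsStrongRep f) (a : E) (b : StrongDual ℝ E)
    {t δ : ℝ} (ht : 0 < t) (hδ : 0 < δ) :
    ∃ (z : E) (w : StrongDual ℝ E),
      f (z, w) ≤ ((w a + b z - b a + δ - t/2*‖z - a‖^2 - t⁻¹/2*‖w - b‖^2 : ℝ) : EReal) := by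
  by_contra hcon
  push_neg at hcon
  have hle : ∀ p : E × StrongDual ℝ E,
      ((p.2 a + b p.1 - b a + δ - t/2*‖p.1 - a‖^2 - t⁻¹/2*‖p.2 - b‖^2 : ℝ) : EReal) ≤ f p :=
    fun p => le_of_lt (hcon p.1 p.2)
  obtain ⟨us, uss, C, h1, h2, _⟩ := sandwich_out f hf a b ht δ hle
  have htinv : 0 < t⁻¹ := inv_pos.2 ht
  have hAM : -(‖us‖*‖uss‖) ≤ uss us := by
    have := uss.le_opNorm us
    have h3 := neg_abs_le (uss us)
    rw [Real.norm_eq_abs] at this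
    nlinarith [this, h3]
  have hq : ‖us‖*‖uss‖ ≤ ‖us‖^2/(2*t) + ‖uss‖^2/(2*t⁻¹) := by
    have he : ‖uss‖^2/(2*t⁻¹) = t*‖uss‖^2/2 := by rw [div2t, inv_inv]; ring
    rw [he, ← sub_nonneg]
    have hid : ‖us‖^2/(2*t) + t*‖uss‖^2/2 - ‖us‖*‖uss‖ = (‖us‖ - t*‖uss‖)^2/(2*t) := by
      field_simp; ring
    rw [hid]
    positivity
  linarith

end Main



section StepMain
variable {E : Type*} [NormedAddCommGroup E] [NormedSpace ℝ E]

lemma pairing_identity (z a : E) (w b : StrongDual ℝ E) :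
    (w - b) (z - a) = w z - w a - b z + b a := by
  simp [ContinuousLinearMap.sub_apply, map_sub]; ring

lemma pairing_lower (z a : E) (w b : StrongDual ℝ E) {t : ℝ} (ht : 0 < t) :
    -(t/2*‖z - a‖^2 + t⁻¹/2*‖w - b‖^2) ≤ (w - b) (z - a) := by
  have h1 : -(‖w - b‖ * ‖z - a‖) ≤ (w - b) (z - a) := by
    have h := (w - b).le_opNorm (z - a)
    rw [Real.norm_eq_abs] at h
    linarith [neg_abs_le ((w - b) (z - a))]
  have h2 : ‖w - b‖ * ‖z - a‖ ≤ t/2*‖z - a‖^2 + t⁻¹/2*‖w - b‖^2 := by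
    rw [← sub_nonneg]
    have hid : t/2*‖z - a‖^2 + t⁻¹/2*‖w - b‖^2 - ‖w - b‖ * ‖z - a‖
        = (t*‖z - a‖ - ‖w - b‖)^2/(2*t) := by
      have := amgm_id t ‖z - a‖ ‖w - b‖ ht
      have he : ‖w - b‖^2/(2*t) = t⁻¹/2*‖w - b‖^2 := div2t t _
      linarith [this, he]
    rw [hid]; positivity
  linarith

lemma step (f : E × StrongDual ℝ E → EReal) (hf : IsStrongRep f) (a : E) (b : StrongDual ℝ E)
    (hfab : f (a, b) ≠ ⊤) {t δ : ℝ} (ht : 0 < t) (hδ : 0 < δ) :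
    ∃ (z : E) (w : StrongDual ℝ E),
      f (z, w) ≤ ((w z + δ : ℝ) : EReal) ∧
      ‖z - a‖ ≤ Real.sqrt (2*((f (a,b)).toReal - b a)/t) + Real.sqrt (2*δ/t) ∧
      ‖w - b‖ ≤ Real.sqrt (2*t*((f (a,b)).toReal - b a)) + Real.sqrt (2*t*δ) := by
  have hπ := hf.1.2.2.2
  have hbot := hf.1.1.2
  set η : ℝ := (f (a,b)).toReal - b a with hηdef
  have hfabeq : f (a,b) = ((η + b a : ℝ) : EReal) := by
    have h1 : η + b a = (f (a,b)).toReal := by rw [hηdef]; ring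
    rw [h1, EReal.coe_toReal hfab (hbot _)]
  have hη0 : 0 ≤ η := by
    have h := hπ (a,b)
    rw [hfabeq, EReal.coe_le_coe_iff] at h
    linarith
  have htinv : 0 < t⁻¹ := inv_pos.2 ht
  -- minorant sandwich with σ = 0
  have hle0 : ∀ p : E × StrongDual ℝ E,
      ((p.2 a + b p.1 - b a + 0 - t/2*‖p.1 - a‖^2 - t⁻¹/2*‖p.2 - b‖^2 : ℝ) : EReal) ≤ f p := by
    intro p
    refine le_trans ?_ (hπ p)
    rw [EReal.coe_le_coe_iff]
    have h1 := pairing_identity p.1 a p.2 b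
    have h2 := pairing_lower p.1 a p.2 b ht
    linarith
  obtain ⟨us, uss, C, hkey2, _, hmin⟩ := sandwich_out f hf a b ht 0 hle0
  rw [sub_zero] at hkey2
  have hCη : C ≤ η := by
    have h := hmin a b
    rw [hfabeq] at h
    simp only [sub_self, map_zero] at h
    rw [EReal.coe_le_coe_iff] at h
    linarith
  have husq : ‖us‖^2/(2*t) ≤ η := by
    have : (0:ℝ) ≤ ‖uss‖^2/(2*t⁻¹) := by positivity
    linarith
  have hussq : ‖uss‖^2/(2*t⁻¹) ≤ η := by
    have : (0:ℝ) ≤ ‖us‖^2/(2*t) := by positivity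
    linarith
  -- near-minimal point
  obtain ⟨z, w, hzw⟩ := exists_near f hf a b ht hδ
  refine ⟨z, w, ?_, ?_, ?_⟩
  · -- gap bound
    refine le_trans hzw ?_
    rw [EReal.coe_le_coe_iff]
    have h1 := pairing_identity z a w b
    have h2 := pairing_lower z a w b ht
    linarith
  · -- norm bound on z - a
    have hL : us (z - a) + uss (w - b) + C - b a + b z + w a
        ≤ w a + b z - b a + δ - t/2*‖z - a‖^2 - t⁻¹/2*‖w - b‖^2 := by
      have h := le_trans (hmin z w) hzw
      rwa [EReal.coe_le_coe_iff] at h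
    have hmain : us (z - a) + uss (w - b) + t/2*‖z - a‖^2 + t⁻¹/2*‖w - b‖^2 ≤ δ - C := by
      linarith
    have hAMs : -(‖us‖*‖z - a‖) ≤ us (z - a) := by
      have h := us.le_opNorm (z - a)
      rw [Real.norm_eq_abs] at h
      linarith [neg_abs_le (us (z - a))]
    have hAMu : -(‖uss‖*‖w - b‖) ≤ uss (w - b) := by
      have h := uss.le_opNorm (w - b)
      rw [Real.norm_eq_abs] at h
      linarith [neg_abs_le (uss (w - b))]
    have hq2' : ‖uss‖*‖w - b‖ - t⁻¹/2*‖w - b‖^2 ≤ ‖uss‖^2/(2*t⁻¹) := by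
      rw [← sub_nonneg]
      have hid := amgm_id t⁻¹ ‖w - b‖ ‖uss‖ htinv
      rw [hid]; positivity
    have hS2 : t/2*‖z - a‖^2 - ‖us‖*‖z - a‖ + ‖us‖^2/(2*t) ≤ δ := by
      linarith
    have hSsq : (‖z - a‖ - ‖us‖/t)^2 ≤ 2*δ/t := by
      have hid := quad_id t ‖z - a‖ ‖us‖ ht
      have h' : t/2*(‖z - a‖ - ‖us‖/t)^2 ≤ δ := by rw [hid]; linarith
      have h'' := mul_le_mul_of_nonneg_left h' (le_of_lt (by positivity : (0:ℝ) < 2/t))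
      calc (‖z - a‖ - ‖us‖/t)^2 = 2/t*(t/2*(‖z - a‖ - ‖us‖/t)^2) := quad_id2 t _ ht
        _ ≤ 2/t*δ := h''
        _ = 2*δ/t := by ring
    have h1 : ‖z - a‖ - ‖us‖/t ≤ Real.sqrt (2*δ/t) := by
      calc ‖z - a‖ - ‖us‖/t ≤ |‖z - a‖ - ‖us‖/t| := le_abs_self _
        _ = Real.sqrt ((‖z - a‖ - ‖us‖/t)^2) := (Real.sqrt_sq_eq_abs _).symm
        _ ≤ Real.sqrt (2*δ/t) := Real.sqrt_le_sqrt hSsq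
    have hb : ‖us‖^2 ≤ 2*t*η := by
      rw [div_le_iff₀ (by positivity)] at husq
      linarith
    have h2 : ‖us‖/t ≤ Real.sqrt (2*η/t) :=
      div_le_sqrt_aux t ‖us‖ η ht hη0 (norm_nonneg _) hb
    linarith
  · -- norm bound on w - b (symmetric)
    obtain ⟨τ, hτdef⟩ : ∃ τ : ℝ, τ = t⁻¹ := ⟨_, rfl⟩
    have hτ : 0 < τ := hτdef ▸ htinv
    have htτ : t*τ = 1 := by rw [hτdef]; field_simp
    have hL : us (z - a) + uss (w - b) + C - b a + b z + w a
        ≤ w a + b z - b a + δ - t/2*‖z - a‖^2 - τ/2*‖w - b‖^2 := by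
      have h := le_trans (hmin z w) hzw
      rw [EReal.coe_le_coe_iff] at h
      rw [hτdef]
      exact h
    have hussq' : ‖uss‖^2/(2*τ) ≤ η := by rw [hτdef]; exact hussq
    have hkey2' : ‖us‖^2/(2*t) + ‖uss‖^2/(2*τ) ≤ C := by rw [hτdef]; exact hkey2
    have hmain : us (z - a) + uss (w - b) + t/2*‖z - a‖^2 + τ/2*‖w - b‖^2 ≤ δ - C := by
      linarith
    have hAMs : -(‖us‖*‖z - a‖) ≤ us (z - a) := by
      have h := us.le_opNorm (z - a)
      rw [Real.norm_eq_abs] at h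
      linarith [neg_abs_le (us (z - a))]
    have hAMu : -(‖uss‖*‖w - b‖) ≤ uss (w - b) := by
      have h := uss.le_opNorm (w - b)
      rw [Real.norm_eq_abs] at h
      linarith [neg_abs_le (uss (w - b))]
    have hq1' : ‖us‖*‖z - a‖ - t/2*‖z - a‖^2 ≤ ‖us‖^2/(2*t) := by
      rw [← sub_nonneg]
      have hid := amgm_id t ‖z - a‖ ‖us‖ ht
      rw [hid]; positivity
    have hU2 : τ/2*‖w - b‖^2 - ‖uss‖*‖w - b‖ + ‖uss‖^2/(2*τ) ≤ δ := by
      linarith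
    have hUsq : (‖w - b‖ - ‖uss‖/τ)^2 ≤ 2*δ/τ := by
      have hid := quad_id τ ‖w - b‖ ‖uss‖ hτ
      have h' : τ/2*(‖w - b‖ - ‖uss‖/τ)^2 ≤ δ := by rw [hid]; linarith
      have h'' := mul_le_mul_of_nonneg_left h' (le_of_lt (by positivity : (0:ℝ) < 2/τ))
      calc (‖w - b‖ - ‖uss‖/τ)^2 = 2/τ*(τ/2*(‖w - b‖ - ‖uss‖/τ)^2) := quad_id2 τ _ hτ
        _ ≤ 2/τ*δ := h''
        _ = 2*δ/τ := by ring
    have h1 : ‖w - b‖ - ‖uss‖/τ ≤ Real.sqrt (2*t*δ) := by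
      have he : 2*δ/τ = 2*t*δ := by rw [hτdef]; exact inv_flip t δ ht
      rw [he] at hUsq
      calc ‖w - b‖ - ‖uss‖/τ ≤ |‖w - b‖ - ‖uss‖/τ| := le_abs_self _
        _ = Real.sqrt ((‖w - b‖ - ‖uss‖/τ)^2) := (Real.sqrt_sq_eq_abs _).symm
        _ ≤ Real.sqrt (2*t*δ) := Real.sqrt_le_sqrt hUsq
    have hb : ‖uss‖^2 ≤ 2*τ*η := by
      rw [div_le_iff₀ (by positivity)] at hussq'
      linarith
    have h2 : ‖uss‖/τ ≤ Real.sqrt (2*t*η) := by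
      have h2' := div_le_sqrt_aux τ ‖uss‖ η hτ hη0 (norm_nonneg uss) hb
      have he2 : 2*η/τ = 2*t*η := by rw [hτdef]; exact inv_flip t η ht
      rwa [he2] at h2'
    linarith
end StepMain

section Cor19
variable {E : Type*} [NormedAddCommGroup E] [NormedSpace ℝ E] [CompleteSpace E]

lemma cor19 (f : E × StrongDual ℝ E → EReal) (hf : IsStrongRep f)
    (p : E × StrongDual ℝ E) (hp : f p ≠ ⊤) {ε : ℝ} (hε : 0 < ε) :
    ∃ y : E, ‖y - p.1‖ ≤ ε ∧ ∃ v : StrongDual ℝ E, f (y, v) = ((v y : ℝ) : EReal) := by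
  classical
  have hπ := hf.1.2.2.2
  have hbot := hf.1.1.2
  have hlsc := hf.1.2.2.1
  set η₀ : ℝ := (f p).toReal - p.2 p.1 with hη₀def
  have hfp : f p = ((η₀ + p.2 p.1 : ℝ) : EReal) := by
    have h1 : η₀ + p.2 p.1 = (f p).toReal := by rw [hη₀def]; ring
    rw [h1, EReal.coe_toReal hp (hbot _)]
  have hη₀ : 0 ≤ η₀ := by
    have h := hπ p
    rw [hfp, EReal.coe_le_coe_iff] at h
    linarith
  set D : ℕ → ℝ := fun k => (η₀+1) * (1/2)^k with hD
  have hDpos : ∀ k, 0 < D k := fun k => by positivity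
  have hDdec : ∀ k, D (k+1) ≤ D k := fun k => by
    rw [hD]
    simp only
    rw [pow_succ]
    nlinarith [pow_pos (by norm_num : (0:ℝ) < 1/2) k]
  set T : ℝ := 128*(η₀+1)/ε^2 with hT
  have hTpos : 0 < T := by positivity
  -- the inductive step
  have key : ∀ (k : ℕ) (c : E × StrongDual ℝ E), f c ≤ ((c.2 c.1 + D k : ℝ) : EReal) →
      ∃ c' : E × StrongDual ℝ E, (f c' ≤ ((c'.2 c'.1 + D (k+1) : ℝ) : EReal)) ∧
        ‖c'.1 - c.1‖ ≤ 2*Real.sqrt (2*(D k)/T) ∧ ‖c'.2 - c.2‖ ≤ 2*Real.sqrt (2*T*(D k)) := by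
    intro k c hc
    have hcne : f c ≠ ⊤ := (hc.trans_lt (EReal.coe_lt_top _)).ne
    have hcne' : f (c.1, c.2) ≠ ⊤ := by rw [Prod.mk.eta]; exact hcne
    obtain ⟨z, w, h1, h2, h3⟩ := step f hf c.1 c.2 hcne' hTpos (hDpos (k+1))
    have hηc0 : 0 ≤ (f (c.1, c.2)).toReal - c.2 c.1 := by
      have h := hπ (c.1, c.2)
      rw [← EReal.coe_toReal hcne' (hbot _), EReal.coe_le_coe_iff] at h
      linarith
    have hηcD : (f (c.1, c.2)).toReal - c.2 c.1 ≤ D k := by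
      have h : f (c.1, c.2) ≤ ((c.2 c.1 + D k : ℝ) : EReal) := by rw [Prod.mk.eta]; exact hc
      rw [← EReal.coe_toReal hcne' (hbot _), EReal.coe_le_coe_iff] at h
      linarith
    refine ⟨(z, w), h1, ?_, ?_⟩
    · refine le_trans h2 ?_
      have e1 : Real.sqrt (2*((f (c.1,c.2)).toReal - c.2 c.1)/T) ≤ Real.sqrt (2*(D k)/T) := by
        apply Real.sqrt_le_sqrt
        gcongr
      have e2 : Real.sqrt (2*(D (k+1))/T) ≤ Real.sqrt (2*(D k)/T) := by
        apply Real.sqrt_le_sqrt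
        gcongr
        exact hDdec k
      linarith
    · refine le_trans h3 ?_
      have e1 : Real.sqrt (2*T*((f (c.1,c.2)).toReal - c.2 c.1)) ≤ Real.sqrt (2*T*(D k)) := by
        apply Real.sqrt_le_sqrt
        nlinarith
      have e2 : Real.sqrt (2*T*(D (k+1))) ≤ Real.sqrt (2*T*(D k)) := by
        apply Real.sqrt_le_sqrt
        nlinarith [hDdec k, hDpos (k+1)]
      linarith
  choose F hF1 hF2 hF3 using key
  have hP0 : f p ≤ ((p.2 p.1 + D 0 : ℝ) : EReal) := by
    rw [hfp, EReal.coe_le_coe_iff, hD]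
    simp only [pow_zero, mul_one]
    linarith
  let seq : (k : ℕ) → {c : E × StrongDual ℝ E // f c ≤ ((c.2 c.1 + D k : ℝ) : EReal)} :=
    fun k => Nat.rec ⟨p, hP0⟩ (fun n ih => ⟨F n ih.1 ih.2, hF1 n ih.1 ih.2⟩) k
  set u : ℕ → E × StrongDual ℝ E := fun k => (seq k).1 with hu
  have hu0 : u 0 = p := rfl
  have hgap : ∀ k, f (u k) ≤ (((u k).2 (u k).1 + D k : ℝ) : EReal) := fun k => (seq k).2
  have hstep1 : ∀ k, ‖(u (k+1)).1 - (u k).1‖ ≤ 2*Real.sqrt (2*(D k)/T) :=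
    fun k => hF2 k (seq k).1 (seq k).2
  have hstep2 : ∀ k, ‖(u (k+1)).2 - (u k).2‖ ≤ 2*Real.sqrt (2*T*(D k)) :=
    fun k => hF3 k (seq k).1 (seq k).2
  -- geometric structure
  set r : ℝ := Real.sqrt (1/2) with hrdef
  have hr0 : 0 ≤ r := Real.sqrt_nonneg _
  have hr1 : r < 1 := by
    rw [hrdef, show (1:ℝ) = Real.sqrt 1 by simp]
    exact Real.sqrt_lt_sqrt (by norm_num) (by norm_num)
  have hr2 : r^2 = 1/2 := Real.sq_sqrt (by norm_num)
  have hrk : ∀ k : ℕ, Real.sqrt ((1/2:ℝ)^k) = r^k := by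
    intro k
    have h' : (r^k)^2 = (1/2:ℝ)^k := by rw [← hr2]; ring
    rw [← h']
    exact Real.sqrt_sq (pow_nonneg hr0 k)
  set Cz : ℝ := 2*Real.sqrt (2*(η₀+1)/T) with hCz
  set Cw : ℝ := 2*Real.sqrt (2*T*(η₀+1)) with hCw
  have hgeo1 : ∀ k, 2*Real.sqrt (2*(D k)/T) = Cz * r^k := by
    intro k
    rw [hCz, hD]
    simp only
    rw [show 2*((η₀+1) * (1/2)^k)/T = (2*(η₀+1)/T) * (1/2)^k by ring]
    rw [Real.sqrt_mul (by positivity) _, hrk k]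
    ring
  have hgeo2 : ∀ k, 2*Real.sqrt (2*T*(D k)) = Cw * r^k := by
    intro k
    rw [hCw, hD]
    simp only
    rw [show 2*T*((η₀+1) * (1/2)^k) = (2*T*(η₀+1)) * (1/2)^k by ring]
    rw [Real.sqrt_mul (by positivity) _, hrk k]
    ring
  have hdist : ∀ n, dist (u n) (u (n+1)) ≤ (Cz + Cw) * r^n := by
    intro n
    rw [Prod.dist_eq]
    have h1 : dist (u n).1 (u (n+1)).1 ≤ Cz * r^n := by
      rw [dist_comm, dist_eq_norm, ← hgeo1 n]; exact hstep1 n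
    have h2 : dist (u n).2 (u (n+1)).2 ≤ Cw * r^n := by
      rw [dist_comm, dist_eq_norm, ← hgeo2 n]; exact hstep2 n
    have hCz0 : 0 ≤ Cz * r^n := le_trans dist_nonneg h1
    have hCw0 : 0 ≤ Cw * r^n := le_trans dist_nonneg h2
    rw [add_mul]
    exact max_le (by linarith) (by linarith)
  have hcauchy : CauchySeq u := cauchySeq_of_le_geometric r (Cz + Cw) hr1 hdist
  obtain ⟨l, hl⟩ := cauchySeq_tendsto_of_complete hcauchy
  -- distance of first coordinates
  have htend1 : Filter.Tendsto (fun k => (u k).1) Filter.atTop (nhds l.1) :=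
    (continuous_fst.tendsto l).comp hl
  have hd1 : ∀ n, dist ((u n).1) ((u (n+1)).1) ≤ Cz * r^n := by
    intro n
    rw [dist_comm, dist_eq_norm, ← hgeo1 n]; exact hstep1 n
  have hdist0 := dist_le_of_le_geometric_of_tendsto₀ r Cz hr1 hd1 htend1
  -- numerical bound : Cz/(1-r) ≤ ε
  have hTval : 2*(η₀+1)/T = ε^2/64 := by
    rw [hT]; field_simp; ring
  have hCzval : Cz = ε/4 := by
    rw [hCz, hTval, show ε^2/64 = (ε/8)^2 by ring, Real.sqrt_sq (by positivity)]
    ring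
  have hrb : r ≤ 3/4 := by
    rw [hrdef, show (3:ℝ)/4 = Real.sqrt ((3/4)^2) from (Real.sqrt_sq (by norm_num)).symm]
    exact Real.sqrt_le_sqrt (by norm_num)
  have hfrac : Cz/(1-r) ≤ ε := by
    rw [div_le_iff₀ (by linarith : (0:ℝ) < 1 - r), hCzval]
    nlinarith
  have hdistp : ‖l.1 - p.1‖ ≤ ε := by
    have : dist ((u 0).1) l.1 ≤ ε := le_trans hdist0 hfrac
    rw [hu0] at this
    rw [← dist_eq_norm, dist_comm]
    exact this
  -- the limit is a coincidence point
  have hπcont : Continuous (fun c : E × StrongDual ℝ E => c.2 c.1) := by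
    have h := (isBoundedBilinearMap_apply (𝕜 := ℝ) (E := E) (F := ℝ)).continuous
    exact h.comp (continuous_snd.prodMk continuous_fst)
  have hflower : ((l.2 l.1 : ℝ) : EReal) ≤ f l := by
    have := hπ l
    exact this
  have hfupper : f l ≤ ((l.2 l.1 : ℝ) : EReal) := by
    by_contra hcon
    push_neg at hcon
    obtain ⟨q, hq1, hq2⟩ := EReal.exists_rat_btwn_of_lt hcon
    have hql : l.2 l.1 < (q:ℝ) := by exact_mod_cast hq1
    -- tendsto of upper bounds
    have hDlim : Filter.Tendsto D Filter.atTop (nhds 0) := by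
      rw [hD]
      have h := tendsto_pow_atTop_nhds_zero_of_lt_one (by norm_num : (0:ℝ) ≤ 1/2)
        (by norm_num : (1:ℝ)/2 < 1)
      simpa using h.const_mul (η₀+1)
    have hπlim : Filter.Tendsto (fun k => (u k).2 (u k).1 + D k) Filter.atTop
        (nhds (l.2 l.1)) := by
      have h1 : Filter.Tendsto (fun k => (u k).2 (u k).1) Filter.atTop (nhds (l.2 l.1)) :=
        (hπcont.tendsto l).comp hl
      simpa using h1.add hDlim
    have hev1 : ∀ᶠ k in Filter.atTop, (u k).2 (u k).1 + D k < (q:ℝ) :=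
      hπlim.eventually_lt_const hql
    have hev2 : ∀ᶠ k in Filter.atTop, (((q:ℝ) : ℝ) : EReal) < f (u k) :=
      hl.eventually (hlsc l ((q:ℝ) : EReal) hq2)
    obtain ⟨k, h1, h2⟩ := (hev1.and hev2).exists
    have h3 := hgap k
    have h4 : (((u k).2 (u k).1 + D k : ℝ) : EReal) < (((q:ℝ)) : EReal) := by
      exact_mod_cast h1
    exact absurd (lt_of_le_of_lt h3 h4) (not_lt.2 (le_of_lt h2))
  refine ⟨l.1, hdistp, l.2, ?_⟩
  rw [Prod.mk.eta]
  exact le_antisymm hfupper hflower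

end Cor19

theorem stmt18 {E F : Type*} [NormedAddCommGroup E] [NormedSpace ℝ E] [CompleteSpace E] [Nontrivial E] [NormedAddCommGroup F] [NormedSpace ℝ F] [CompleteSpace F] [Nontrivial F]
    (A : E →L[ℝ] F) (f : E × StrongDual ℝ E → EReal) (g : F × StrongDual ℝ F → EReal)
    (hf : IsStrongRep f) (hg : IsStrongRep g)
    (H : Submodule ℝ F) (hHc : IsClosed (H : Set F))
    (h1 : ∀ (y : F) (x : E), (Mgraph g y).Nonempty → (Mgraph f x).Nonempty →
      y - A x ∈ H)
    (h2 : (H : Set F) ⊆ {z : F | ∃ l : ℝ, 0 < l ∧ ∃ p : F × StrongDual ℝ F, g p ≠ ⊤ ∧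
      ∃ q : E × StrongDual ℝ E, f q ≠ ⊤ ∧ z = l • (p.1 - A q.1)}) :
    {z : F | ∃ l : ℝ, 0 < l ∧ ∃ p : F × StrongDual ℝ F, g p ≠ ⊤ ∧
      ∃ q : E × StrongDual ℝ E, f q ≠ ⊤ ∧ z = l • (p.1 - A q.1)} = (H : Set F) := by
  refine Set.Subset.antisymm ?_ h2
  rintro z ⟨l, hl, p, hp, q, hq, rfl⟩
  have hkey : p.1 - A q.1 ∈ H := by
    have hcl : p.1 - A q.1 ∈ closure (H : Set F) := by
      rw [Metric.mem_closure_iff]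
      intro ρ hρ
      have hεF : 0 < ρ/4 := by linarith
      have hA1 : 0 < 1 + ‖A‖ := by positivity
      have hεE : 0 < ρ/(4*(1+‖A‖)) := by positivity
      obtain ⟨y, hy, v, hv⟩ := cor19 g hg p hp hεF
      obtain ⟨x, hx, w, hw⟩ := cor19 f hf q hq hεE
      have hmem : y - A x ∈ H := h1 y x ⟨v, hv⟩ ⟨w, hw⟩
      refine ⟨y - A x, hmem, ?_⟩
      rw [dist_eq_norm]
      have hsplit : (p.1 - A q.1) - (y - A x) = (p.1 - y) + A (x - q.1) := by
        rw [map_sub]; abel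
      rw [hsplit]
      have hAop := A.le_opNorm (x - q.1)
      have hrev1 : ‖p.1 - y‖ = ‖y - p.1‖ := norm_sub_rev _ _
      have hrev2 : ‖x - q.1‖ = ‖x - q.1‖ := rfl
      have hxq : ‖x - q.1‖ ≤ ρ/(4*(1+‖A‖)) := hx
      have hbound : ‖A‖ * ‖x - q.1‖ ≤ ‖A‖ * (ρ/(4*(1+‖A‖))) :=
        mul_le_mul_of_nonneg_left hxq (norm_nonneg A)
      have hfrac : ‖A‖ * (ρ/(4*(1+‖A‖))) ≤ ρ/4 := by
        rw [mul_comm, div_mul_eq_mul_div, div_le_div_iff₀ (by positivity) (by norm_num)]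
        nlinarith [norm_nonneg A, hρ]
      calc ‖(p.1 - y) + A (x - q.1)‖ ≤ ‖p.1 - y‖ + ‖A (x - q.1)‖ := norm_add_le _ _
        _ ≤ ρ/4 + ρ/4 := by
            rw [hrev1]
            have := le_trans hAop (le_trans hbound hfrac)
            linarith [hy]
        _ < ρ := by linarith
    rwa [hHc.closure_eq] at hcl
  exact H.smul_mem l hkey
end
end
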